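/- arXiv:1405.3237 — 7 statements merged into one kernel-verified Lean document; each statement's English description precedes it below -/
import Mathlib

section
/- Let G be a group satisfying (H1). Let H, K ∈ L(G) with K normal in H such that the quotient H/K is virtually nilpotent, i.e. there is a subgroup M with K ≤ M ≤ H, M of finite index in H, K normal in M, and M/K nilpotent. Then the centralizers coincide: C_G(K) = C_G(H). -/
variable {G : Type*} [Group G]

/-- The conjugate `B ^ g = g⁻¹ * B * g` of a subgroup `B` by an element `g`. -/
def conjBy (B : Subgroup G) (g : G) : Subgroup G :=
  B.map (MulAut.conj g⁻¹).toMonoidHom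

/-- A subgroup is virtually solvable if it has a solvable subgroup of finite index. -/
def VirtSolvable (H : Subgroup G) : Prop :=
  ∃ M : Subgroup G, M ≤ H ∧ M.relIndex H ≠ 0 ∧ IsSolvable ↥M

/-- A subgroup is virtually nilpotent if it has a nilpotent subgroup of finite index. -/
def VirtNilpotent (H : Subgroup G) : Prop :=
  ∃ M : Subgroup G, M ≤ H ∧ M.relIndex H ≠ 0 ∧ Group.IsNilpotent ↥M

/-- Hypothesis (H1): every virtually solvable subgroup whose normalizer has finite index
(i.e. belonging to `L(G)`) is trivial. -/
def HypH1 (G : Type*) [Group G] : Prop :=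
  ∀ H : Subgroup G, (Subgroup.normalizer (H : Set G)).FiniteIndex → VirtSolvable H → H = ⊥

/-- Hypothesis (H2): every nontrivial normal subgroup of `G` contains the derived subgroup
of some finite-index subgroup of `G`. -/
def HypH2 (G : Type*) [Group G] : Prop :=
  ∀ N : Subgroup G, N.Normal → N ≠ ⊥ →
    ∃ G₀ : Subgroup G, G₀.FiniteIndex ∧ ⁅G₀, G₀⁆ ≤ N

/-- `VA K H` means `K ≤va H`: `K ≤ H` and `K` contains the derived subgroup of some
finite-index subgroup of `H`. -/
def VA (K H : Subgroup G) : Prop :=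
  K ≤ H ∧ ∃ A : Subgroup G, A ≤ H ∧ A.relIndex H ≠ 0 ∧ ⁅A, A⁆ ≤ K

/-- A subgroup `B` is basal if its normalizer has finite index and every conjugate of `B`
either equals `B` or meets `B` trivially. -/
def IsBasal (B : Subgroup G) : Prop :=
  (Subgroup.normalizer (B : Set G)).FiniteIndex ∧ ∀ g : G, conjBy B g = B ∨ conjBy B g ⊓ B = ⊥

/-- The rigid normalizer `R(A)` of a basal subgroup `A`: the intersection of the
normalizers of all basal subgroups meeting `A` trivially. -/
def rigidNormalizer (A : Subgroup G) : Subgroup G :=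
  ⨅ B ∈ {B : Subgroup G | IsBasal B ∧ A ⊓ B = ⊥}, Subgroup.normalizer (B : Set G)

/-! ### Auxiliary material for the proof -/

namespace AuxGW

open Subgroup

/-- The commutator `[φ, x] = φ⁻¹ x⁻¹ φ x`. -/
def commE {G : Type*} [Group G] (φ x : G) : G := φ⁻¹ * x⁻¹ * φ * x

section Elementary

variable {η φ x w t n : G}

lemma commE_eq_one_iff : commE φ x = 1 ↔ x * φ = φ * x := by
  constructor
  · intro h
    have h2 : φ * x = x * φ := by
      simpa [commE, mul_assoc] using congrArg (fun z => x * (φ * z)) h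
    exact h2.symm
  · intro h
    simp only [commE, mul_assoc]
    rw [← h]
    simp

lemma commE_left_mul (h : η * x = x * η) : commE (η * φ) x = commE φ x := by
  have h1 : x⁻¹ * η = η * x⁻¹ := by
    have := congrArg (fun z => x⁻¹ * z * x⁻¹) h
    simpa [mul_assoc] using this
  simp only [commE, mul_inv_rev, mul_assoc]
  congr 1
  rw [← mul_assoc x⁻¹ η, h1, mul_assoc, inv_mul_cancel_left]

lemma commE_right_mul (h : w * φ = φ * w) : commE φ (x * w) = w⁻¹ * commE φ x * w := by
  have h1 : φ⁻¹ * w⁻¹ = w⁻¹ * φ⁻¹ := by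
    rw [← mul_inv_rev, ← mul_inv_rev, h]
  simp only [commE, mul_inv_rev, mul_assoc]
  rw [← mul_assoc φ⁻¹ w⁻¹, h1, mul_assoc]

lemma commE_conj (t φ x : G) : t⁻¹ * commE φ x * t = commE (φ * t) x * (commE t x)⁻¹ := by
  simp only [commE, mul_inv_rev, inv_inv]
  group

lemma commE_conj' (n φ x : G) :
    n * commE φ x * n⁻¹ = commE (n * φ * n⁻¹) (n * x * n⁻¹) := by
  simp only [commE, mul_inv_rev, inv_inv]
  group

end Elementary

section SubgroupFacts

variable {G : Type*} [Group G]

lemma conj_mem_centralizer {W : Subgroup G} {φ x : G}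
    (hφ : φ ∈ centralizer (W : Set G))
    (hx : ∀ w ∈ W, x * w * x⁻¹ ∈ W) :
    x⁻¹ * φ * x ∈ centralizer (W : Set G) := by
  rw [mem_centralizer_iff] at hφ ⊢
  intro w hw
  have hw' : x * w * x⁻¹ ∈ W := hx w hw
  have h := hφ _ hw'
  have h2 := congrArg (fun z => x⁻¹ * z * x) h
  simpa [mul_assoc] using h2

lemma normalizer_le_normalizer_centralizer (X : Subgroup G) :
    (Subgroup.normalizer (X : Set G)) ≤ normalizer ((centralizer (X : Set G) : Subgroup G) : Set G) := by
  intro n hn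
  have hn' : n⁻¹ ∈ (Subgroup.normalizer (X : Set G)) := inv_mem hn
  rw [mem_normalizer_iff] at hn hn' ⊢
  intro φ
  constructor
  · intro hφ
    have : (n⁻¹)⁻¹ * φ * n⁻¹ ∈ centralizer (X : Set G) := by
      refine conj_mem_centralizer hφ ?_
      intro w hw
      have := (hn' w).mp hw
      simpa using this
    simpa [mul_assoc] using this
  · intro hφ
    have : n⁻¹ * (n * φ * n⁻¹) * n ∈ centralizer (X : Set G) := by
      refine conj_mem_centralizer hφ ?_
      intro w hw
      exact (hn w).mp hw
    simpa [mul_assoc] using this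

lemma normalizer_inf_aux {A B : Subgroup G} :
    (Subgroup.normalizer (A : Set G)) ⊓ (Subgroup.normalizer (B : Set G)) ≤ normalizer ((A ⊓ B : Subgroup G) : Set G) := by
  intro n hn
  obtain ⟨ha, hb⟩ := Subgroup.mem_inf.mp hn
  rw [mem_normalizer_iff] at ha hb ⊢
  intro h
  simp only [Subgroup.mem_inf]
  constructor
  · rintro ⟨h1, h2⟩; exact ⟨(ha h).mp h1, (hb h).mp h2⟩
  · rintro ⟨h1, h2⟩; exact ⟨(ha h).mpr h1, (hb h).mpr h2⟩

lemma kill_of_virtSolvable (hH1 : HypH1 G) {X N : Subgroup G}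
    (hle : N ≤ (Subgroup.normalizer (X : Set G))) (hfi : N.FiniteIndex) (hvs : VirtSolvable X) : X = ⊥ := by
  haveI := hfi
  exact hH1 X (Subgroup.finiteIndex_of_le hle) hvs

lemma virtSolvable_of_comm {X : Subgroup G}
    (h : ∀ a ∈ X, ∀ b ∈ X, a * b = b * a) : VirtSolvable X := by
  refine ⟨X, le_rfl, by simp [Subgroup.relIndex_self], ?_⟩
  exact isSolvable_of_comm (fun a b => Subtype.ext (h a a.2 b b.2))

lemma virtSolvable_of_finite {X : Subgroup G} (hfin : Finite ↥X) : VirtSolvable X := by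
  refine ⟨⊥, bot_le, ?_, ?_⟩
  · rw [Subgroup.relIndex_bot_left]
    exact Nat.card_ne_zero.mpr ⟨⟨⟨1, X.one_mem⟩⟩, hfin⟩
  · exact isSolvable_of_comm (fun a b => Subsingleton.elim _ _)

/-- If an element centralizes `X`, normalizes `Y`, and `C_G(X) ⊓ Y = ⊥`, then
it centralizes `Y`.  Packaged as an equality of subgroups. -/
lemma core_centralizer {X Y : Subgroup G} (hXY : X ≤ Y)
    (hconj : ∀ y ∈ Y, ∀ x ∈ X, y * x * y⁻¹ ∈ X)
    (htriv : centralizer (X : Set G) ⊓ Y = ⊥) :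
    centralizer (X : Set G) ⊓ (Subgroup.normalizer (Y : Set G)) = centralizer (Y : Set G) := by
  apply le_antisymm
  · rintro c hc
    obtain ⟨hc1, hc2⟩ := Subgroup.mem_inf.mp hc
    rw [mem_centralizer_iff]
    intro y hy
    have hcy : commE c y = 1 := by
      have m1 : commE c y ∈ Y := by
        have hc2' : c⁻¹ ∈ (Subgroup.normalizer (Y : Set G)) := inv_mem hc2
        have h1 : c⁻¹ * y⁻¹ * c ∈ Y := by
          have := (Subgroup.mem_normalizer_iff.mp hc2' y⁻¹).mp (inv_mem hy)
          simpa [mul_assoc] using this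
        have : (c⁻¹ * y⁻¹ * c) * y ∈ Y := mul_mem h1 hy
        simpa [commE, mul_assoc] using this
      have m2 : commE c y ∈ centralizer (X : Set G) := by
        have h1 : y⁻¹ * c * y ∈ centralizer (X : Set G) :=
          conj_mem_centralizer hc1 (fun x hx => hconj y hy x hx)
        have : c⁻¹ * (y⁻¹ * c * y) ∈ centralizer (X : Set G) := mul_mem (inv_mem hc1) h1
        simpa [commE, mul_assoc] using this
      have hmem : commE c y ∈ centralizer (X : Set G) ⊓ Y := Subgroup.mem_inf.mpr ⟨m2, m1⟩
      rw [htriv] at hmem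
      exact Subgroup.mem_bot.mp hmem
    exact commE_eq_one_iff.mp hcy
  · intro c hc
    have hcomm : ∀ y ∈ Y, y * c = c * y := mem_centralizer_iff.mp hc
    refine Subgroup.mem_inf.mpr ⟨?_, ?_⟩
    · exact centralizer_le (SetLike.coe_subset_coe.mpr hXY) hc
    · rw [Subgroup.mem_normalizer_iff]
      intro h
      constructor
      · intro hh
        have : c * h * c⁻¹ = h := by
          rw [← hcomm h hh, mul_assoc, mul_inv_cancel, mul_one]
        rwa [this]
      · intro hh
        have h2 := hcomm _ hh
        -- (c*h*c⁻¹)*c = c*(c*h*c⁻¹)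
        have h3 : c * h = c * (c * h * c⁻¹) := by
          simpa [mul_assoc] using h2
        have h4 : h = c * h * c⁻¹ := mul_left_cancel h3
        rwa [← h4] at hh

end SubgroupFacts

section FinLemma

variable {G : Type*} [Group G]

/-- The key "finite relative index" step:  if `W ≤ C` with `W` normalized by `C`,
`W` of finite index in `C`, and both `W` and `C` have normalizers of finite index,
then (under (H1)) the centralizer of `W` is contained in the centralizer of `C`. -/
lemma centralizer_le_of_finite_relIndex (hH1 : HypH1 G) (W C : Subgroup G)
    (hWC : W ≤ C)
    (hconj : ∀ x ∈ C, ∀ w ∈ W, x * w * x⁻¹ ∈ W)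
    (hrel : W.relIndex C ≠ 0)
    (hWN : (Subgroup.normalizer (W : Set G)).FiniteIndex) (hCN : (Subgroup.normalizer (C : Set G)).FiniteIndex) :
    centralizer (W : Set G) ≤ centralizer (C : Set G) := by
  set Cw := centralizer (W : Set G) with hCw_def
  set Cc := centralizer (C : Set G) with hCc_def
  have hconj' : ∀ x ∈ C, ∀ w ∈ W, x⁻¹ * w * x ∈ W := by
    intro x hx w hw
    simpa using hconj x⁻¹ (inv_mem hx) w hw
  have hCwconj : ∀ x ∈ C, ∀ φ ∈ Cw, x⁻¹ * φ * x ∈ Cw := by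
    intro x hx φ hφ
    exact conj_mem_centralizer hφ (fun w hw => hconj x hx w hw)
  have hNW_Cw : (Subgroup.normalizer (W : Set G)) ≤ (Subgroup.normalizer (Cw : Set G)) := normalizer_le_normalizer_centralizer W
  have hNC_Cc : (Subgroup.normalizer (C : Set G)) ≤ (Subgroup.normalizer (Cc : Set G)) := normalizer_le_normalizer_centralizer C
  -- Step 1 : W ⊓ Cw = ⊥
  have hZW : W ⊓ Cw = ⊥ := by
    refine kill_of_virtSolvable hH1 (N := (Subgroup.normalizer (W : Set G))) ?_ hWN ?_
    · intro n hn
      exact normalizer_inf_aux (Subgroup.mem_inf.mpr ⟨hn, hNW_Cw hn⟩)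
    · refine virtSolvable_of_comm ?_
      intro a ha b hb
      exact mem_centralizer_iff.mp (Subgroup.mem_inf.mp hb).2 a (Subgroup.mem_inf.mp ha).1
  -- Step 2 : Cw ⊓ C = ⊥
  haveI hfinQ : Finite (↥C ⧸ W.subgroupOf C) := Nat.finite_of_card_ne_zero hrel
  have hE : Cw ⊓ C = ⊥ := by
    haveI := hWN; haveI := hCN
    refine kill_of_virtSolvable hH1 (N := (Subgroup.normalizer (W : Set G)) ⊓ (Subgroup.normalizer (C : Set G))) ?_ inferInstance ?_
    · intro n hn
      obtain ⟨hn1, hn2⟩ := Subgroup.mem_inf.mp hn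
      exact normalizer_inf_aux (Subgroup.mem_inf.mpr ⟨hNW_Cw hn1, hn2⟩)
    · refine virtSolvable_of_finite ?_
      refine Finite.of_injective
        (fun (a : ↥(Cw ⊓ C)) =>
          (QuotientGroup.mk (⟨(a : G), (Subgroup.mem_inf.mp a.2).2⟩ : ↥C) :
            ↥C ⧸ W.subgroupOf C)) ?_
      intro a b hab
      rw [QuotientGroup.eq] at hab
      rw [Subgroup.mem_subgroupOf] at hab
      have hWmem : (a : G)⁻¹ * b ∈ W := by simpa using hab
      have hCwmem : (a : G)⁻¹ * b ∈ Cw :=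
        mul_mem (inv_mem (Subgroup.mem_inf.mp a.2).1) (Subgroup.mem_inf.mp b.2).1
      have hbot : (a : G)⁻¹ * b ∈ W ⊓ Cw := Subgroup.mem_inf.mpr ⟨hWmem, hCwmem⟩
      rw [hZW] at hbot
      have : (a : G)⁻¹ * (b : G) = 1 := Subgroup.mem_bot.mp hbot
      have : (a : G) = b := by
        rw [inv_mul_eq_one] at this; exact this
      exact Subtype.ext this
  -- Step 3 : Cw ⊓ (Subgroup.normalizer (C : Set G)) = Cc
  have hCORE : Cw ⊓ (Subgroup.normalizer (C : Set G)) = Cc :=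
    core_centralizer hWC (fun y hy x hx => hconj y hy x hx) hE
  -- Step 4 : finite relative index of Cc in Cw
  haveI := hCN
  have ha : Cc.relIndex Cw ≠ 0 := by
    rw [← hCORE, inf_relIndex_left]
    haveI : ((Subgroup.normalizer (C : Set G)).subgroupOf Cw).FiniteIndex := inferInstance
    exact this.index_ne_zero
  have hCcCw : Cc ≤ Cw := centralizer_le (SetLike.coe_subset_coe.mpr hWC)
  -- the set of commutators
  set S' : Set G := {g | ∃ φ ∈ Cw, ∃ x ∈ C, g = commE φ x} with hS'_def
  have hCommMem : ∀ φ ∈ Cw, ∀ x ∈ C, commE φ x ∈ Cw := by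
    intro φ hφ x hx
    have h1 : commE φ x = φ⁻¹ * (x⁻¹ * φ * x) := by
      simp [commE, mul_assoc]
    rw [h1]
    exact mul_mem (inv_mem hφ) (hCwconj x hx φ hφ)
  have hS'Cw : ∀ g ∈ S', g ∈ Cw := by
    rintro g ⟨φ, hφ, x, hx, rfl⟩
    exact hCommMem φ hφ x hx
  have habsorb : ∀ φ ∈ Cw, ∀ x ∈ C, ∀ w ∈ W, commE φ (x * w) = commE φ x := by
    intro φ hφ x hx w hw
    have hφw : w * φ = φ * w := mem_centralizer_iff.mp hφ w hw
    have h2 : commE φ (x * w) = w⁻¹ * commE φ x * w := commE_right_mul hφw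
    have h3 : commE φ x ∈ Cw := hCommMem φ hφ x hx
    have h4 : w * commE φ x = commE φ x * w := mem_centralizer_iff.mp h3 w hw
    rw [h2, mul_assoc, ← h4, ← mul_assoc, inv_mul_cancel, one_mul]
  -- Step 5 : S' is finite
  haveI hfinQa : Finite (↥Cw ⧸ Cc.subgroupOf Cw) := Nat.finite_of_card_ne_zero ha
  have hS'fin : S'.Finite := by
    have hsub : S' ⊆ Set.range
        (fun p : (↥Cw ⧸ Cc.subgroupOf Cw) × (↥C ⧸ W.subgroupOf C) =>
          commE (((Quotient.out p.1 : ↥Cw) : G))⁻¹ ((Quotient.out p.2 : ↥C) : G)) := by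
      rintro g ⟨φ, hφ, x, hx, rfl⟩
      refine ⟨(QuotientGroup.mk (⟨φ⁻¹, inv_mem hφ⟩ : ↥Cw), QuotientGroup.mk (⟨x, hx⟩ : ↥C)), ?_⟩
      obtain ⟨η, hη⟩ := QuotientGroup.mk_out_eq_mul (Cc.subgroupOf Cw) (⟨φ⁻¹, inv_mem hφ⟩ : ↥Cw)
      obtain ⟨ω, hω⟩ := QuotientGroup.mk_out_eq_mul (W.subgroupOf C) (⟨x, hx⟩ : ↥C)
      have heCc : ((η : ↥Cw) : G) ∈ Cc := Subgroup.mem_subgroupOf.mp η.2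
      have huW : ((ω : ↥C) : G) ∈ W := Subgroup.mem_subgroupOf.mp ω.2
      set e : G := ((η : ↥Cw) : G)
      set u : G := ((ω : ↥C) : G)
      -- value of the two outs
      have h1 : ((Quotient.out (QuotientGroup.mk (⟨φ⁻¹, inv_mem hφ⟩ : ↥Cw) :
          ↥Cw ⧸ Cc.subgroupOf Cw) : ↥Cw) : G) = φ⁻¹ * e := by
        rw [hη]; rfl
      have h2 : ((Quotient.out (QuotientGroup.mk (⟨x, hx⟩ : ↥C) :
          ↥C ⧸ W.subgroupOf C) : ↥C) : G) = x * u := by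
        rw [hω]; rfl
      dsimp only
      rw [h1, h2, mul_inv_rev, inv_inv]
      have hex : e⁻¹ * x = x * e⁻¹ := by
        have hxe : x * e = e * x := mem_centralizer_iff.mp heCc x hx
        have := congrArg (fun z => e⁻¹ * z * e⁻¹) hxe
        simpa [mul_assoc] using this
      rw [habsorb (e⁻¹ * φ) (mul_mem (inv_mem (hCcCw heCc)) hφ) x hx u huW]
      exact commE_left_mul hex
    exact Set.Finite.subset (Set.finite_range _) hsub
  -- Step 6 : the subgroup generated by the commutators
  set T := Subgroup.closure S' with hT_def
  have hTCw : T ≤ Cw := (Subgroup.closure_le _).mpr (fun g hg => hS'Cw g hg)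
  have hkey : ∀ n ∈ (Subgroup.normalizer (W : Set G)) ⊓ (Subgroup.normalizer (C : Set G)), ∀ g ∈ S', n * g * n⁻¹ ∈ S' := by
    rintro n hn g ⟨φ, hφ, x, hx, rfl⟩
    obtain ⟨hn1, hn2⟩ := Subgroup.mem_inf.mp hn
    refine ⟨n * φ * n⁻¹, ?_, n * x * n⁻¹, ?_, commE_conj' n φ x⟩
    · exact (Subgroup.mem_normalizer_iff.mp (hNW_Cw hn1) φ).mp hφ
    · exact (Subgroup.mem_normalizer_iff.mp hn2 x).mp hx
  have hTstab : ∀ n ∈ (Subgroup.normalizer (W : Set G)) ⊓ (Subgroup.normalizer (C : Set G)), ∀ t ∈ T, n * t * n⁻¹ ∈ T := by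
    intro n hn t ht
    refine Subgroup.closure_induction
      (fun g hg => Subgroup.subset_closure (hkey n hn g hg))
      (by simpa using one_mem T)
      (fun a b _ _ pa pb => ?_) (fun a _ pa => ?_) ht
    · have h := mul_mem pa pb
      have e : (n * a * n⁻¹) * (n * b * n⁻¹) = n * (a * b) * n⁻¹ := by group
      rwa [e] at h
    · have h := inv_mem pa
      have e : (n * a * n⁻¹)⁻¹ = n * a⁻¹ * n⁻¹ := by group
      rwa [e] at h
  have hTN : (Subgroup.normalizer (W : Set G)) ⊓ (Subgroup.normalizer (C : Set G)) ≤ (Subgroup.normalizer (T : Set G)) := by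
    intro n hn
    rw [Subgroup.mem_normalizer_iff]
    intro t
    constructor
    · exact fun ht => hTstab n hn t ht
    · intro ht
      have := hTstab n⁻¹ (inv_mem hn) _ ht
      simpa [mul_assoc] using this
  haveI := hWN; haveI := hCN
  have hTfi : (Subgroup.normalizer (T : Set G)).FiniteIndex := Subgroup.finiteIndex_of_le hTN
  -- Step 7 : T = ⊥ via (H1)
  have hT : T = ⊥ := by
    rcases Set.eq_empty_or_nonempty S' with hemp | hne
    · rw [hT_def, hemp, Subgroup.closure_empty]
    · refine hH1 T hTfi ?_
      haveI hfS' : Finite ↥S' := hS'fin.to_subtype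
      haveI : Nonempty ↥S' := hne.to_subtype
      set P : Set G := (fun p : G × G => p.1 * p.2⁻¹) '' (S' ×ˢ S') with hP_def
      have hPfin : P.Finite := (hS'fin.prod hS'fin).image _
      haveI hfP : Finite ↥P := hPfin.to_subtype
      have horb : ∀ s ∈ S', ∀ t ∈ Cw, t * s * t⁻¹ ∈ P := by
        rintro s ⟨φ, hφ, x, hx, rfl⟩ t ht
        refine ⟨(commE (φ * t⁻¹) x, commE t⁻¹ x),
          ⟨⟨φ * t⁻¹, mul_mem hφ (inv_mem ht), x, hx, rfl⟩,
            ⟨t⁻¹, inv_mem ht, x, hx, rfl⟩⟩, ?_⟩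
        have h := commE_conj t⁻¹ φ x
        rw [inv_inv] at h
        exact h.symm
      have hstab : ∀ s : ↥S', (Subgroup.centralizer {(s : G)}).relIndex T ≠ 0 := by
        intro s
        have hfinq : Finite (↥T ⧸ (Subgroup.centralizer {(s : G)}).subgroupOf T) := by
          refine Finite.of_injective
            (fun q =>
              (⟨((Quotient.out q : ↥T) : G) * s * ((Quotient.out q : ↥T) : G)⁻¹,
                horb (s : G) s.2 _ (hTCw (Quotient.out q).2)⟩ : ↥P)) ?_
          intro q1 q2 h12
          have h12' : ((Quotient.out q1 : ↥T) : G) * s * ((Quotient.out q1 : ↥T) : G)⁻¹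
              = ((Quotient.out q2 : ↥T) : G) * s * ((Quotient.out q2 : ↥T) : G)⁻¹ :=
            congrArg Subtype.val h12
          set a : G := ((Quotient.out q1 : ↥T) : G) with ha_def
          set b : G := ((Quotient.out q2 : ↥T) : G) with hb_def
          have hv : (s : G) * (a⁻¹ * b) = (a⁻¹ * b) * s := by
            have := congrArg (fun z => a⁻¹ * z * b) h12'
            simpa [mul_assoc] using this
          have hmem : (Quotient.out q1 : ↥T)⁻¹ * (Quotient.out q2 : ↥T)
              ∈ (Subgroup.centralizer {(s : G)}).subgroupOf T := by
            rw [Subgroup.mem_subgroupOf]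
            rw [mem_centralizer_iff]
            intro h hh
            rw [Set.mem_singleton_iff] at hh
            subst hh
            simpa [ha_def, hb_def] using hv
          calc q1 = QuotientGroup.mk (Quotient.out q1) := (QuotientGroup.out_eq' q1).symm
            _ = QuotientGroup.mk (Quotient.out q2) := (QuotientGroup.eq).mpr hmem
            _ = q2 := QuotientGroup.out_eq' q2
        have hnonempty : Nonempty (↥T ⧸ (Subgroup.centralizer {(s : G)}).subgroupOf T) :=
          ⟨QuotientGroup.mk 1⟩
        exact Nat.card_ne_zero.mpr ⟨hnonempty, hfinq⟩
      set Z : Subgroup G := ⨅ s : ↥S', Subgroup.centralizer {(s : G)} with hZ_def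
      have hZrel : Z.relIndex T ≠ 0 := relIndex_iInf_ne_zero (fun s => hstab s)
      refine ⟨T ⊓ Z, inf_le_left, ?_, ?_⟩
      · rw [inf_relIndex_left]; exact hZrel
      · have hcomm : ∀ a ∈ T ⊓ Z, ∀ b ∈ T ⊓ Z, a * b = b * a := by
          intro a ha b hb
          obtain ⟨haT, haZ⟩ := Subgroup.mem_inf.mp ha
          obtain ⟨hbT, _⟩ := Subgroup.mem_inf.mp hb
          have haS : ∀ g ∈ S', g * a = a * g := by
            intro g hg
            have hmem : a ∈ Subgroup.centralizer {g} := by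
              rw [hZ_def] at haZ
              exact Subgroup.mem_iInf.mp haZ ⟨g, hg⟩
            exact mem_centralizer_iff.mp hmem g rfl
          have hTa : ∀ t ∈ T, t * a = a * t := by
            intro t ht
            refine Subgroup.closure_induction (fun g hg => haS g hg) (by simp)
              (fun u v _ _ pu pv => ?_) (fun u _ pu => ?_) ht
            · rw [mul_assoc, pv, ← mul_assoc, pu, mul_assoc]
            · have := congrArg (fun z => u⁻¹ * z * u⁻¹) pu
              simpa [mul_assoc] using this.symm
          exact (hTa b hbT).symm
        exact isSolvable_of_comm (fun a b => Subtype.ext (hcomm a a.2 b b.2))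
  -- conclusion
  intro φ hφ
  rw [mem_centralizer_iff]
  intro x hx
  have hmem : commE φ x ∈ T := Subgroup.subset_closure ⟨φ, hφ, x, hx, rfl⟩
  rw [hT, Subgroup.mem_bot] at hmem
  exact commE_eq_one_iff.mp hmem

end FinLemma

end AuxGW

theorem statement1 (hH1 : HypH1 G) (H K : Subgroup G)
    (hHL : (Subgroup.normalizer (H : Set G)).FiniteIndex) (hKL : (Subgroup.normalizer (K : Set G)).FiniteIndex)
    (hKH : K ≤ H) (hKnorm : (K.subgroupOf H).Normal)
    (M : Subgroup G) (hKM : K ≤ M) (hMH : M ≤ H) (hMfin : M.relIndex H ≠ 0)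
    [hnormM : (K.subgroupOf M).Normal]
    (hnilp : Group.IsNilpotent (↥M ⧸ K.subgroupOf M)) :
    Subgroup.centralizer (K : Set G) = Subgroup.centralizer (H : Set G) := by
  classical
  haveI := hKL; haveI := hHL
  set C : Subgroup G := Subgroup.centralizer (K : Set G) with hC_def
  have hNKC : (Subgroup.normalizer (K : Set G)) ≤ (Subgroup.normalizer (C : Set G)) := AuxGW.normalizer_le_normalizer_centralizer K
  have hCfi : (Subgroup.normalizer (C : Set G)).FiniteIndex := Subgroup.finiteIndex_of_le hNKC
  -- conjugation of K by elements of H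
  have hconjK : ∀ y ∈ H, ∀ x ∈ K, y * x * y⁻¹ ∈ K := by
    intro y hy x hx
    have hmem : (⟨x, hKH hx⟩ : ↥H) ∈ K.subgroupOf H := Subgroup.mem_subgroupOf.mpr hx
    have h1 := hKnorm.conj_mem _ hmem ⟨y, hy⟩
    have h2 := Subgroup.mem_subgroupOf.mp h1
    simpa using h2
  -- K ⊓ C = ⊥
  have hKC : K ⊓ C = ⊥ := by
    refine AuxGW.kill_of_virtSolvable hH1 (N := (Subgroup.normalizer (K : Set G))) ?_ hKL ?_
    · intro n hn
      exact AuxGW.normalizer_inf_aux (Subgroup.mem_inf.mpr ⟨hn, hNKC hn⟩)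
    · refine AuxGW.virtSolvable_of_comm ?_
      intro a ha b hb
      exact Subgroup.mem_centralizer_iff.mp (Subgroup.mem_inf.mp hb).2 a
        (Subgroup.mem_inf.mp ha).1
  -- C ⊓ H = ⊥
  have hCH : C ⊓ H = ⊥ := by
    refine AuxGW.kill_of_virtSolvable hH1 (N := (Subgroup.normalizer (K : Set G)) ⊓ (Subgroup.normalizer (H : Set G))) ?_
      inferInstance ?_
    · intro n hn
      obtain ⟨h1, h2⟩ := Subgroup.mem_inf.mp hn
      exact AuxGW.normalizer_inf_aux (Subgroup.mem_inf.mpr ⟨hNKC h1, h2⟩)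
    · refine ⟨C ⊓ M, inf_le_inf_left _ hMH, ?_, ?_⟩
      · have hCM : C ⊓ M = (C ⊓ H) ⊓ M := by
          rw [inf_assoc]
          congr 1
          exact (inf_eq_right.mpr hMH).symm
        rw [hCM, Subgroup.inf_relIndex_left]
        intro h0
        exact hMfin (Subgroup.relIndex_eq_zero_of_le_right inf_le_right h0)
      · haveI := hnilp
        haveI : Group.IsSolvable (↥M ⧸ K.subgroupOf M) := inferInstance
        have hinj : Function.Injective
            ((QuotientGroup.mk' (K.subgroupOf M)).comp
              (Subgroup.inclusion (inf_le_right : C ⊓ M ≤ M))) := by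
          refine (injective_iff_map_eq_one _).mpr ?_
          intro a haker
          rw [MonoidHom.comp_apply, QuotientGroup.mk'_apply,
            QuotientGroup.eq_one_iff] at haker
          have haK : (a : G) ∈ K := by
            have := Subgroup.mem_subgroupOf.mp haker
            simpa [Subgroup.coe_inclusion] using this
          have haC : (a : G) ∈ C := (Subgroup.mem_inf.mp a.2).1
          have hbot : (a : G) ∈ K ⊓ C := Subgroup.mem_inf.mpr ⟨haK, haC⟩
          rw [hKC] at hbot
          have : (a : G) = 1 := Subgroup.mem_bot.mp hbot
          exact Subtype.ext (by simpa using this)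
        exact solvable_of_solvable_injective hinj
  -- C ⊓ N(H) = centralizer H
  have hCORE : C ⊓ (Subgroup.normalizer (H : Set G)) = Subgroup.centralizer (H : Set G) :=
    AuxGW.core_centralizer hKH hconjK hCH
  -- the centralizer of H has finite relative index in C
  have hrelCH : (Subgroup.centralizer (H : Set G)).relIndex C ≠ 0 := by
    rw [← hCORE, Subgroup.inf_relIndex_left]
    haveI : ((Subgroup.normalizer (H : Set G)).subgroupOf C).FiniteIndex := inferInstance
    exact this.index_ne_zero
  -- W : the C-core of the centralizer of H
  set X : Subgroup ↥C := (Subgroup.centralizer (H : Set G)).subgroupOf C with hX_def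
  set W : Subgroup G := Subgroup.map C.subtype X.normalCore with hW_def
  have hmemW : ∀ g : G,
      g ∈ W ↔ g ∈ C ∧ ∀ c ∈ C, c * g * c⁻¹ ∈ Subgroup.centralizer (H : Set G) := by
    intro g
    constructor
    · rintro ⟨y, hy, rfl⟩
      refine ⟨y.2, ?_⟩
      intro c hc
      have h1 : (⟨c, hc⟩ : ↥C) * y * (⟨c, hc⟩ : ↥C)⁻¹ ∈ X := hy ⟨c, hc⟩
      have h2 := Subgroup.mem_subgroupOf.mp h1
      simpa using h2
    · rintro ⟨hgC, hall⟩
      refine ⟨⟨g, hgC⟩, ?_, rfl⟩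
      intro b
      rw [Subgroup.mem_subgroupOf]
      simpa using hall (b : G) b.2
  have hWC : W ≤ C := fun g hg => ((hmemW g).mp hg).1
  have hWCH : W ≤ Subgroup.centralizer (H : Set G) := by
    intro g hg
    obtain ⟨hgC, hall⟩ := (hmemW g).mp hg
    have := hall 1 (one_mem C)
    simpa using this
  have hconjW : ∀ x ∈ C, ∀ w ∈ W, x * w * x⁻¹ ∈ W := by
    intro x hx w hw
    obtain ⟨hwC, hall⟩ := (hmemW w).mp hw
    refine (hmemW _).mpr ⟨mul_mem (mul_mem hx hwC) (inv_mem hx), ?_⟩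
    intro c hc
    have h1 := hall (c * x) (mul_mem hc hx)
    have heq : (c * x) * w * (c * x)⁻¹ = c * (x * w * x⁻¹) * c⁻¹ := by group
    rwa [heq] at h1
  have hrelW : W.relIndex C ≠ 0 := by
    haveI hXfi : X.FiniteIndex := ⟨hrelCH⟩
    haveI hXc : X.normalCore.FiniteIndex := inferInstance
    have hsub : W.subgroupOf C = X.normalCore := by
      rw [hW_def]
      exact Subgroup.comap_map_eq_self_of_injective C.subtype_injective _
    show (W.subgroupOf C).index ≠ 0
    rw [hsub]
    exact hXc.index_ne_zero
  have hNW : (Subgroup.normalizer (K : Set G)) ⊓ (Subgroup.normalizer (H : Set G)) ≤ (Subgroup.normalizer (W : Set G)) := by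
    have hkeyW : ∀ n ∈ (Subgroup.normalizer (K : Set G)) ⊓ (Subgroup.normalizer (H : Set G)), ∀ g ∈ W, n * g * n⁻¹ ∈ W := by
      intro n hn g hg
      obtain ⟨hn1, hn2⟩ := Subgroup.mem_inf.mp hn
      have hnC := hNKC hn1
      have hnCH := AuxGW.normalizer_le_normalizer_centralizer H hn2
      obtain ⟨hgC, hall⟩ := (hmemW g).mp hg
      refine (hmemW _).mpr ⟨(Subgroup.mem_normalizer_iff.mp hnC g).mp hgC, ?_⟩
      intro c hc
      have hc' : n⁻¹ * c * n ∈ C := by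
        have := (Subgroup.mem_normalizer_iff.mp (inv_mem hnC) c).mp hc
        simpa [mul_assoc] using this
      have h1 := hall _ hc'
      have h2 : n * ((n⁻¹ * c * n) * g * (n⁻¹ * c * n)⁻¹) * n⁻¹
          ∈ Subgroup.centralizer (H : Set G) :=
        (Subgroup.mem_normalizer_iff.mp hnCH _).mp h1
      have heq : n * ((n⁻¹ * c * n) * g * (n⁻¹ * c * n)⁻¹) * n⁻¹
          = c * (n * g * n⁻¹) * c⁻¹ := by group
      rwa [heq] at h2
    intro n hn
    rw [Subgroup.mem_normalizer_iff]
    intro g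
    constructor
    · exact fun hg => hkeyW n hn g hg
    · intro hg
      have := hkeyW n⁻¹ (inv_mem hn) _ hg
      simpa [mul_assoc] using this
  have hWfi : (Subgroup.normalizer (W : Set G)).FiniteIndex := Subgroup.finiteIndex_of_le hNW
  -- apply the finite relative index lemma
  have hFIN := AuxGW.centralizer_le_of_finite_relIndex hH1 W C hWC hconjW hrelW hWfi hCfi
  have hHCw : H ≤ Subgroup.centralizer (W : Set G) := Subgroup.le_centralizer_iff.mpr hWCH
  have hHCc : H ≤ Subgroup.centralizer (C : Set G) := fun h hh => hFIN (hHCw hh)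
  have hfinal : C ≤ Subgroup.centralizer (H : Set G) := Subgroup.le_centralizer_iff.mp hHCc
  exact le_antisymm hfinal (Subgroup.centralizer_le (SetLike.coe_subset_coe.mpr hKH))
end

section
/- Let G be a group satisfying (H1) and let H₁, H₂ ∈ L(G). Then H₁ ∩ H₂ = 1 if and only if every element of H₁ commutes with every element of H₂ (i.e. the commutator subgroup [H₁, H₂] is trivial). -/
variable {G : Type*} [Group G]

open scoped commutatorElement

lemma myMemNormInf {g : G} {P Q : Subgroup G} (hP : g ∈ Subgroup.normalizer (P : Set G)) (hQ : g ∈ Subgroup.normalizer (Q : Set G)) :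
    g ∈ Subgroup.normalizer ((P ⊓ Q : Subgroup G) : Set G) := by
  rw [Subgroup.mem_normalizer_iff] at hP hQ ⊢
  intro h
  simp only [Subgroup.mem_inf]
  rw [← hP h, ← hQ h]

lemma myMemNormCent {g : G} {P : Subgroup G} (hg : g ∈ Subgroup.normalizer (P : Set G)) :
    g ∈ Subgroup.normalizer ((Subgroup.centralizer (P : Set G) : Subgroup G) : Set G) := by
  rw [Subgroup.mem_normalizer_iff] at hg ⊢
  intro h
  constructor
  · intro hh
    rw [Subgroup.mem_centralizer_iff] at hh ⊢
    intro p hp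
    have hp' : g⁻¹ * p * g ∈ P := by
      refine (hg (g⁻¹ * p * g)).mpr ?_
      have e : g * (g⁻¹ * p * g) * g⁻¹ = p := by group
      rw [e]; exact hp
    have h1 := hh _ hp'
    calc p * (g * h * g⁻¹) = g * ((g⁻¹ * p * g) * h) * g⁻¹ := by group
      _ = g * (h * (g⁻¹ * p * g)) * g⁻¹ := by rw [h1]
      _ = (g * h * g⁻¹) * p := by group
  · intro hh
    rw [Subgroup.mem_centralizer_iff] at hh ⊢
    intro p hp
    have hp' : g * p * g⁻¹ ∈ P := (hg p).mp hp
    have h1 := hh _ hp'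
    calc p * h = g⁻¹ * ((g * p * g⁻¹) * (g * h * g⁻¹)) * g := by group
      _ = g⁻¹ * ((g * h * g⁻¹) * (g * p * g⁻¹)) * g := by rw [h1]
      _ = h * p := by group

lemma myConjMemCent {x g : G} {S : Set G} (hg : g ∈ Subgroup.centralizer S)
    (hx : ∀ a ∈ S, x⁻¹ * a * x ∈ S) : x * g * x⁻¹ ∈ Subgroup.centralizer S := by
  rw [Subgroup.mem_centralizer_iff] at hg ⊢
  intro a ha
  have h1 := hg _ (hx a ha)
  calc a * (x * g * x⁻¹) = x * ((x⁻¹ * a * x) * g) * x⁻¹ := by group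
    _ = x * (g * (x⁻¹ * a * x)) * x⁻¹ := by rw [h1]
    _ = (x * g * x⁻¹) * a := by group

lemma myMapConj {g : G} {H : Subgroup G} (hg : g ∈ Subgroup.normalizer (H : Set G)) :
    H.map (MulAut.conj g).toMonoidHom = H := by
  rw [Subgroup.mem_normalizer_iff] at hg
  ext x
  simp only [Subgroup.mem_map, MulEquiv.coe_toMonoidHom, MulAut.conj_apply]
  constructor
  · rintro ⟨y, hy, rfl⟩; exact (hg y).mp hy
  · intro hx
    refine ⟨g⁻¹ * x * g, (hg _).mpr ?_, by group⟩
    have e : g * (g⁻¹ * x * g) * g⁻¹ = x := by group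
    rw [e]; exact hx

lemma myMemNormComm {g : G} {P Q : Subgroup G} (hP : g ∈ Subgroup.normalizer (P : Set G))
    (hQ : g ∈ Subgroup.normalizer (Q : Set G)) : g ∈ Subgroup.normalizer ((⁅P, Q⁆ : Subgroup G) : Set G) := by
  have key : ∀ x : G, x ∈ Subgroup.normalizer (P : Set G) → x ∈ Subgroup.normalizer (Q : Set G) →
      ∀ k ∈ (⁅P, Q⁆ : Subgroup G), x * k * x⁻¹ ∈ (⁅P, Q⁆ : Subgroup G) := by
    intro x hxP hxQ k hk
    have hmap : (⁅P, Q⁆ : Subgroup G).map (MulAut.conj x).toMonoidHom = ⁅P, Q⁆ := by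
      rw [Subgroup.map_commutator, myMapConj hxP, myMapConj hxQ]
    rw [← hmap]
    exact ⟨k, hk, by simp [MulAut.conj_apply]⟩
  rw [Subgroup.mem_normalizer_iff]
  intro h
  constructor
  · exact fun hh => key g hP hQ h hh
  · intro hh
    have h2 := key g⁻¹ (inv_mem hP) (inv_mem hQ) _ hh
    have e : g⁻¹ * (g * h * g⁻¹) * g⁻¹⁻¹ = h := by group
    rwa [e] at h2

lemma myTrivOfComm (hH1 : HypH1 G) {X : Subgroup G} (hfi : (Subgroup.normalizer (X : Set G)).FiniteIndex)
    (hcomm : ∀ a ∈ X, ∀ b ∈ X, a * b = b * a) : X = ⊥ := by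
  apply hH1 X hfi
  refine ⟨X, le_rfl, by simp [Subgroup.relIndex_self], ?_⟩
  exact isSolvable_of_comm fun a b => Subtype.ext (hcomm a a.2 b b.2)


theorem statement2 (hH1 : HypH1 G) (H₁ H₂ : Subgroup G)
    (h₁ : (Subgroup.normalizer (H₁ : Set G)).FiniteIndex) (h₂ : (Subgroup.normalizer (H₂ : Set G)).FiniteIndex) :
    H₁ ⊓ H₂ = ⊥ ↔ ⁅H₁, H₂⁆ = ⊥ := by
  haveI := h₁; haveI := h₂
  constructor
  · intro h
    set Nn := (Subgroup.normalizer (H₁ : Set G) ⊓ Subgroup.normalizer (H₂ : Set G)).normalCore with hNndef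
    haveI hNnormal : Nn.Normal := Subgroup.normalCore_normal _
    haveI hNfi : Nn.FiniteIndex := Subgroup.finiteIndex_normalCore _
    have hN1 : Nn ≤ Subgroup.normalizer (H₁ : Set G) := (Subgroup.normalCore_le _).trans inf_le_left
    have hN2 : Nn ≤ Subgroup.normalizer (H₂ : Set G) := (Subgroup.normalCore_le _).trans inf_le_right
    have hNself : ∀ g : G, g ∈ Subgroup.normalizer (Nn : Set G) := by
      intro g
      rw [Subgroup.normalizer_eq_top_iff.mpr hNnormal]
      trivial
    have fiNorm : ∀ X : Subgroup G, Nn ≤ Subgroup.normalizer (X : Set G) → (Subgroup.normalizer (X : Set G)).FiniteIndex :=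
      fun X hle => Subgroup.finiteIndex_of_le hle
    -- the "Z(X) = 1" trick
    have Ztriv : ∀ X : Subgroup G, Nn ≤ Subgroup.normalizer (X : Set G) →
        X ⊓ Subgroup.centralizer (X : Set G) = ⊥ := by
      intro X hle
      refine myTrivOfComm hH1 ?_ ?_
      · exact fiNorm _ fun g hg => myMemNormInf (hle hg) (myMemNormCent (hle hg))
      · intro a ha b hb
        rw [Subgroup.mem_inf] at ha hb
        exact (Subgroup.mem_centralizer_iff.mp ha.2 b hb.1).symm
    -- main symmetric step : Q centralizes P ⊓ Nn
    have step : ∀ P Q : Subgroup G, Nn ≤ Subgroup.normalizer (P : Set G) → Nn ≤ Subgroup.normalizer (Q : Set G) → P ⊓ Q = ⊥ →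
        Q ≤ Subgroup.centralizer ((P ⊓ Nn : Subgroup G) : Set G) := by
      intro P Q hNP hNQ hPQ
      have hconjA : ∀ x ∈ P, ∀ a ∈ P ⊓ Nn, x⁻¹ * a * x ∈ P ⊓ Nn := by
        intro x hx a ha
        rw [Subgroup.mem_inf] at ha ⊢
        constructor
        · exact mul_mem (mul_mem (inv_mem hx) ha.1) hx
        · have := hNnormal.conj_mem a ha.2 x⁻¹
          simpa using this
      have hconjB : ∀ y ∈ Q, ∀ b ∈ Q ⊓ Nn, y⁻¹ * b * y ∈ Q ⊓ Nn := by
        intro y hy b hb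
        rw [Subgroup.mem_inf] at hb ⊢
        constructor
        · exact mul_mem (mul_mem (inv_mem hy) hb.1) hy
        · have := hNnormal.conj_mem b hb.2 y⁻¹
          simpa using this
      -- (i): A' and B' commute elementwise
      have comm0 : ∀ a ∈ P ⊓ Nn, ∀ b ∈ Q ⊓ Nn, a * b = b * a := by
        intro a ha b hb
        rw [Subgroup.mem_inf] at ha hb
        have t1 : ⁅a, b⁆ ∈ P := by
          have e : ⁅a, b⁆ = a * (b * a⁻¹ * b⁻¹) := by group
          rw [e]
          exact mul_mem ha.1
            ((Subgroup.mem_normalizer_iff.mp (hNP hb.2) a⁻¹).mp (inv_mem ha.1))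
        have t2 : ⁅a, b⁆ ∈ Q := by
          have e : ⁅a, b⁆ = (a * b * a⁻¹) * b⁻¹ := by group
          rw [e]
          exact mul_mem ((Subgroup.mem_normalizer_iff.mp (hNQ ha.2) b).mp hb.1)
            (inv_mem hb.1)
        have : ⁅a, b⁆ ∈ P ⊓ Q := ⟨t1, t2⟩
        rw [hPQ, Subgroup.mem_bot] at this
        exact commutatorElement_eq_one_iff_mul_comm.mp this
      have hAcB : ∀ a ∈ P ⊓ Nn, a ∈ Subgroup.centralizer ((Q ⊓ Nn : Subgroup G) : Set G) := by
        intro a ha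
        rw [Subgroup.mem_centralizer_iff]
        intro b hb
        exact (comm0 a ha b hb).symm
      have hZB := Ztriv (Q ⊓ Nn) fun t ht => myMemNormInf (hNQ ht) (hNself t)
      -- now the key: each y ∈ Q centralizes A'
      intro y hy
      rw [Subgroup.mem_centralizer_iff]
      intro a ha
      have haP : a ∈ P ⊓ Nn := ha
      have ha2 := haP
      rw [Subgroup.mem_inf] at ha2
      have c1 : ⁅y, a⁆ ∈ Q := by
        have e : ⁅y, a⁆ = y * (a * y⁻¹ * a⁻¹) := by group
        rw [e]
        exact mul_mem hy ((Subgroup.mem_normalizer_iff.mp (hNQ ha2.2) y⁻¹).mp (inv_mem hy))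
      have c2 : ⁅y, a⁆ ∈ Nn := by
        have e : ⁅y, a⁆ = (y * a * y⁻¹) * a⁻¹ := by group
        rw [e]
        exact mul_mem (hNnormal.conj_mem a ha2.2 y) (inv_mem ha2.2)
      have c3 : ⁅y, a⁆ ∈ Subgroup.centralizer ((Q ⊓ Nn : Subgroup G) : Set G) := by
        have e : ⁅y, a⁆ = (y * a * y⁻¹) * a⁻¹ := by group
        rw [e]
        refine mul_mem ?_ (inv_mem (hAcB a haP))
        exact myConjMemCent (hAcB a haP) fun b hb => hconjB y hy b hb
      have : ⁅y, a⁆ ∈ (Q ⊓ Nn) ⊓ Subgroup.centralizer ((Q ⊓ Nn : Subgroup G) : Set G) :=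
        ⟨⟨c1, c2⟩, c3⟩
      rw [hZB, Subgroup.mem_bot] at this
      exact (commutatorElement_eq_one_iff_mul_comm.mp this).symm
    set A := H₁ ⊓ Nn with hAdef
    set B := H₂ ⊓ Nn with hBdef
    have stepA : H₂ ≤ Subgroup.centralizer (A : Set G) := step H₁ H₂ hN1 hN2 h
    have stepB : H₁ ≤ Subgroup.centralizer (B : Set G) :=
      step H₂ H₁ hN2 hN1 (by rw [inf_comm]; exact h)
    have hconjA : ∀ x ∈ H₁, ∀ a ∈ (A : Set G), x⁻¹ * a * x ∈ (A : Set G) := by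
      intro x hx a ha
      simp only [SetLike.mem_coe, hAdef, Subgroup.mem_inf] at ha ⊢
      refine ⟨mul_mem (mul_mem (inv_mem hx) ha.1) hx, ?_⟩
      have := hNnormal.conj_mem a ha.2 x⁻¹
      simpa using this
    have hconjB : ∀ y ∈ H₂, ∀ b ∈ (B : Set G), y⁻¹ * b * y ∈ (B : Set G) := by
      intro y hy b hb
      simp only [SetLike.mem_coe, hBdef, Subgroup.mem_inf] at hb ⊢
      refine ⟨mul_mem (mul_mem (inv_mem hy) hb.1) hy, ?_⟩
      have := hNnormal.conj_mem b hb.2 y⁻¹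
      simpa using this
    -- K ≤ C(A) ⊓ C(B)
    have hKA : (⁅H₁, H₂⁆ : Subgroup G) ≤ Subgroup.centralizer (A : Set G) := by
      rw [Subgroup.commutator_le]
      intro x hx y hy
      have e : ⁅x, y⁆ = (x * y * x⁻¹) * y⁻¹ := by group
      rw [e]
      exact mul_mem (myConjMemCent (stepA hy) (hconjA x hx)) (inv_mem (stepA hy))
    have hKB : (⁅H₁, H₂⁆ : Subgroup G) ≤ Subgroup.centralizer (B : Set G) := by
      rw [Subgroup.commutator_le]
      intro x hx y hy
      have e : ⁅x, y⁆ = x * (y * x⁻¹ * y⁻¹) := by group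
      rw [e]
      exact mul_mem (stepB hx) (myConjMemCent (inv_mem (stepB hx)) (hconjB y hy))
    -- centralizer(A) ∩ Nn centralizes H₁ (and symmetrically)
    have step6 : ∀ P : Subgroup G, Nn ≤ Subgroup.normalizer (P : Set G) →
        ∀ g ∈ Subgroup.centralizer ((P ⊓ Nn : Subgroup G) : Set G), g ∈ Nn →
        g ∈ Subgroup.centralizer (P : Set G) := by
      intro P hNP g hgC hgN
      have hZ := Ztriv (P ⊓ Nn) fun t ht => myMemNormInf (hNP ht) (hNself t)
      rw [Subgroup.mem_centralizer_iff]
      intro x hx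
      have d1 : ⁅g, x⁆ ∈ P := by
        have e : ⁅g, x⁆ = (g * x * g⁻¹) * x⁻¹ := by group
        rw [e]
        exact mul_mem ((Subgroup.mem_normalizer_iff.mp (hNP hgN) x).mp hx) (inv_mem hx)
      have d2 : ⁅g, x⁆ ∈ Nn := by
        have e : ⁅g, x⁆ = g * (x * g⁻¹ * x⁻¹) := by group
        rw [e]
        refine mul_mem hgN ?_
        have := hNnormal.conj_mem g⁻¹ (inv_mem hgN) x
        simpa using this
      have d3 : ⁅g, x⁆ ∈ Subgroup.centralizer ((P ⊓ Nn : Subgroup G) : Set G) := by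
        have hconj : x * g * x⁻¹ ∈ Subgroup.centralizer ((P ⊓ Nn : Subgroup G) : Set G) := by
          refine myConjMemCent hgC ?_
          intro a ha
          simp only [SetLike.mem_coe, Subgroup.mem_inf] at ha ⊢
          refine ⟨mul_mem (mul_mem (inv_mem hx) ha.1) hx, ?_⟩
          have := hNnormal.conj_mem a ha.2 x⁻¹
          simpa using this
        have e2 : ⁅g, x⁆ = g * (x * g⁻¹ * x⁻¹) := by group
        rw [e2]
        refine mul_mem hgC ?_
        have : x * g⁻¹ * x⁻¹ = (x * g * x⁻¹)⁻¹ := by group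
        rw [this]
        exact inv_mem hconj
      have : ⁅g, x⁆ ∈ (P ⊓ Nn) ⊓ Subgroup.centralizer ((P ⊓ Nn : Subgroup G) : Set G) :=
        ⟨⟨d1, d2⟩, d3⟩
      rw [hZ, Subgroup.mem_bot] at this
      exact (commutatorElement_eq_one_iff_mul_comm.mp this).symm
    -- K ∈ L(G)
    have hKfi : (Subgroup.normalizer ((⁅H₁, H₂⁆ : Subgroup G) : Set G)).FiniteIndex :=
      fiNorm _ fun g hg => myMemNormComm (hN1 hg) (hN2 hg)
    -- K ⊓ Nn is abelian
    have hKcomm : ∀ u ∈ (⁅H₁, H₂⁆ : Subgroup G) ⊓ Nn, ∀ v ∈ (⁅H₁, H₂⁆ : Subgroup G) ⊓ Nn,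
        u * v = v * u := by
      intro u hu v hv
      rw [Subgroup.mem_inf] at hu hv
      have hu1 : u ∈ Subgroup.centralizer (H₁ : Set G) :=
        step6 H₁ hN1 u (hKA hu.1) hu.2
      have hu2 : u ∈ Subgroup.centralizer (H₂ : Set G) :=
        step6 H₂ hN2 u (hKB hu.1) hu.2
      have hsup : H₁ ⊔ H₂ ≤ Subgroup.centralizer ({u} : Set G) := by
        refine sup_le ?_ ?_
        · intro x hx
          rw [Subgroup.mem_centralizer_iff]
          rintro w rfl
          exact (Subgroup.mem_centralizer_iff.mp hu1 x hx).symm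
        · intro x hx
          rw [Subgroup.mem_centralizer_iff]
          rintro w rfl
          exact (Subgroup.mem_centralizer_iff.mp hu2 x hx).symm
      have hvsup : v ∈ H₁ ⊔ H₂ := by
        have : (⁅H₁, H₂⁆ : Subgroup G) ≤ H₁ ⊔ H₂ := by
          rw [Subgroup.commutator_le]
          intro x hx y hy
          rw [commutatorElement_def]
          exact mul_mem (mul_mem (mul_mem (Subgroup.mem_sup_left hx)
            (Subgroup.mem_sup_right hy)) (inv_mem (Subgroup.mem_sup_left hx)))
            (inv_mem (Subgroup.mem_sup_right hy))
        exact this hv.1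
      have := Subgroup.mem_centralizer_iff.mp (hsup hvsup) u rfl
      exact this
    -- apply (H1) to K
    apply hH1 _ hKfi
    refine ⟨(⁅H₁, H₂⁆ : Subgroup G) ⊓ Nn, inf_le_left, ?_, ?_⟩
    · rw [inf_comm, Subgroup.inf_relIndex_right]
      intro h0
      have hdvd : Nn.relIndex ⁅H₁, H₂⁆ ∣ Nn.index := Subgroup.relIndex_dvd_index_of_normal Nn _
      rw [h0] at hdvd
      exact hNfi.index_ne_zero (zero_dvd_iff.mp hdvd)
    · exact isSolvable_of_comm fun a b => Subtype.ext (hKcomm a a.2 b b.2)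
  · intro hc
    refine myTrivOfComm hH1 ?_ ?_
    · refine Subgroup.finiteIndex_of_le (H := Subgroup.normalizer (H₁ : Set G) ⊓ Subgroup.normalizer (H₂ : Set G)) ?_
      intro g hg
      rw [Subgroup.mem_inf] at hg
      exact myMemNormInf hg.1 hg.2
    · intro a ha b hb
      rw [Subgroup.mem_inf] at ha hb
      have : ⁅a, b⁆ ∈ (⊥ : Subgroup G) := hc ▸ Subgroup.commutator_mem_commutator ha.1 hb.2
      exact commutatorElement_eq_one_iff_mul_comm.mp (Subgroup.mem_bot.mp this)
end

section
/- Let G be a group satisfying (H1) and (H2), and let H ∈ L(G). Then H ∩ C_G(H) = 1, and the subgroup ⟨H, C_G(H)⟩ generated by H and its centralizer contains the derived subgroup of some finite-index subgroup of G. -/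
variable {G : Type*} [Group G]

namespace St3Aux

open Subgroup

lemma mem_conjBy {B : Subgroup G} {g x : G} : x ∈ conjBy B g ↔ g * x * g⁻¹ ∈ B := by
  rw [conjBy, Subgroup.mem_map_equiv]
  simp [MulAut.conj]

lemma conjBy_conjBy (B : Subgroup G) (g g' : G) :
    conjBy (conjBy B g) g' = conjBy B (g * g') := by
  ext x
  have e : g * (g' * x * g'⁻¹) * g⁻¹ = g * g' * x * (g * g')⁻¹ := by group
  rw [mem_conjBy, mem_conjBy, e, mem_conjBy]

lemma conjBy_one (B : Subgroup G) : conjBy B 1 = B := by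
  ext x; simp [mem_conjBy]

lemma conjBy_mono {A B : Subgroup G} (h : A ≤ B) (g : G) : conjBy A g ≤ conjBy B g := by
  intro x hx
  rw [mem_conjBy] at hx ⊢
  exact h hx

lemma conjBy_left_injective (g : G) :
    Function.Injective (fun P : Subgroup G => conjBy P g) := by
  intro A B h
  have := congrArg (fun P => conjBy P g⁻¹) h
  simpa [conjBy_conjBy, conjBy_one] using this

lemma conjBy_inf (A B : Subgroup G) (g : G) :
    conjBy (A ⊓ B) g = conjBy A g ⊓ conjBy B g := by
  ext x; simp [mem_conjBy]

lemma conjBy_of_normal {D : Subgroup G} (hD : D.Normal) (g : G) : conjBy D g = D := by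
  ext x
  rw [mem_conjBy]
  constructor
  · intro h
    have h2 := hD.conj_mem _ h g⁻¹
    have e : g⁻¹ * (g * x * g⁻¹) * g⁻¹⁻¹ = x := by group
    rwa [e] at h2
  · intro h; exact hD.conj_mem x h g

lemma conjBy_eq_of_mem_normalizer {P : Subgroup G} {d : G} (hd : d ∈ Subgroup.normalizer (P : Set G)) :
    conjBy P d = P := by
  ext x
  rw [mem_conjBy]
  exact (Subgroup.mem_normalizer_iff.mp hd x).symm

lemma conjBy_sInf (T : Set (Subgroup G)) (g : G) :
    conjBy (sInf T) g = sInf ((fun P => conjBy P g) '' T) := by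
  ext x
  simp only [mem_conjBy, Subgroup.mem_sInf, Set.mem_image]
  constructor
  · rintro h _ ⟨P, hP, rfl⟩
    exact mem_conjBy.mpr (h P hP)
  · intro h P hP
    exact mem_conjBy.mp (h _ ⟨P, hP, rfl⟩)

lemma mem_normalizer_inf {A B : Subgroup G} {g : G} (hA : g ∈ Subgroup.normalizer (A : Set G))
    (hB : g ∈ Subgroup.normalizer (B : Set G)) : g ∈ Subgroup.normalizer ((A ⊓ B : Subgroup G) : Set G) := by
  rw [Subgroup.mem_normalizer_iff] at hA hB ⊢
  intro x
  rw [Subgroup.mem_inf, Subgroup.mem_inf]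
  exact and_congr (hA x) (hB x)

lemma mem_normalizer_sInf {S : Set (Subgroup G)} {g : G}
    (h : ∀ P ∈ S, g ∈ Subgroup.normalizer (P : Set G)) : g ∈ Subgroup.normalizer ((sInf S : Subgroup G) : Set G) := by
  rw [Subgroup.mem_normalizer_iff]
  intro x
  simp only [Subgroup.mem_sInf]
  exact ⟨fun hx P hP => (Subgroup.mem_normalizer_iff.mp (h P hP) x).mp (hx P hP),
    fun hx P hP => (Subgroup.mem_normalizer_iff.mp (h P hP) x).mpr (hx P hP)⟩

lemma mem_normalizer_centralizer {P : Subgroup G} {g : G} (hg : g ∈ Subgroup.normalizer (P : Set G)) :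
    g ∈ Subgroup.normalizer ((Subgroup.centralizer (P : Set G) : Subgroup G) : Set G) := by
  rw [Subgroup.mem_normalizer_iff]
  intro x
  constructor
  · intro hx
    rw [Subgroup.mem_centralizer_iff] at hx ⊢
    intro h hh
    have hh' : g⁻¹ * h * g ∈ P := by
      have h2 := (Subgroup.mem_normalizer_iff.mp (inv_mem hg) h).mp hh
      have e : g⁻¹ * h * g⁻¹⁻¹ = g⁻¹ * h * g := by group
      rwa [e] at h2
    have hc := hx _ hh'
    calc h * (g * x * g⁻¹) = g * ((g⁻¹ * h * g) * x) * g⁻¹ := by group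
      _ = g * (x * (g⁻¹ * h * g)) * g⁻¹ := by rw [hc]
      _ = (g * x * g⁻¹) * h := by group
  · intro hx
    rw [Subgroup.mem_centralizer_iff] at hx ⊢
    intro h hh
    have hh' : g * h * g⁻¹ ∈ P := (Subgroup.mem_normalizer_iff.mp hg h).mp hh
    have hc := hx _ hh'
    calc h * x = g⁻¹ * ((g * h * g⁻¹) * (g * x * g⁻¹)) * g := by group
      _ = g⁻¹ * ((g * x * g⁻¹) * (g * h * g⁻¹)) * g := by rw [hc]
      _ = x * h := by group

lemma triv_of_abelian (hH1 : HypH1 G) {P : Subgroup G} (hfi : (Subgroup.normalizer (P : Set G)).FiniteIndex)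
    (hab : ∀ x ∈ P, ∀ y ∈ P, x * y = y * x) : P = ⊥ := by
  refine hH1 P hfi ⟨P, le_rfl, by simp [Subgroup.relIndex_self], ?_⟩
  exact isSolvable_of_comm fun a b => Subtype.ext (hab a a.2 b b.2)

lemma triv_of_finite (hH1 : HypH1 G) {P : Subgroup G} (hfi : (Subgroup.normalizer (P : Set G)).FiniteIndex)
    (hfin : Finite ↥P) : P = ⊥ := by
  refine hH1 P hfi ⟨⊥, bot_le, ?_, ?_⟩
  · rw [Subgroup.relIndex_bot_left]
    exact Nat.card_ne_zero.mpr ⟨⟨⟨1, P.one_mem⟩⟩, hfin⟩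
  · exact isSolvable_of_comm fun a b => Subsingleton.elim _ _

lemma finite_of_disjoint {P D : Subgroup G} (hD : D.FiniteIndex) (h : P ⊓ D = ⊥) :
    Finite ↥P := by
  haveI := hD
  apply Finite.of_injective (fun p : ↥P => (QuotientGroup.mk (p : G) : G ⧸ D))
  intro a b hab
  rw [QuotientGroup.eq] at hab
  have hm : (a : G)⁻¹ * b ∈ P ⊓ D := ⟨P.mul_mem (P.inv_mem a.2) b.2, hab⟩
  rw [h, Subgroup.mem_bot] at hm
  exact Subtype.ext (by rw [← inv_mul_eq_one]; exact hm)

lemma normalizer_finiteIndex {P D : Subgroup G} (hD : D.FiniteIndex)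
    (h : D ≤ Subgroup.normalizer (P : Set G)) : (Subgroup.normalizer (P : Set G)).FiniteIndex := by
  haveI := hD
  exact Subgroup.finiteIndex_of_le h

/-- Key lemma: if `K ≤ H` is normalized by `H`, `C_H(K) = 1`, and `q` normalizes `H` and
centralizes `K`, then `q` centralizes `H`. -/
lemma mem_centralizer_of {K H : Subgroup G} (hHnormK : ∀ h ∈ H, h ∈ Subgroup.normalizer (K : Set G))
    (hCHK : H ⊓ Subgroup.centralizer (K : Set G) = ⊥) {q : G} (hqN : q ∈ Subgroup.normalizer (H : Set G))
    (hqC : q ∈ Subgroup.centralizer (K : Set G)) :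
    q ∈ Subgroup.centralizer (H : Set G) := by
  rw [Subgroup.mem_centralizer_iff]
  intro h hh
  have hh0 : h ∈ H := hh
  have hh' : q⁻¹ * h * q ∈ H := by
    have h2 := (Subgroup.mem_normalizer_iff.mp (inv_mem hqN) h).mp hh0
    rwa [inv_inv] at h2
  have hmem : h * (q⁻¹ * h * q)⁻¹ ∈ H ⊓ Subgroup.centralizer (K : Set G) := by
    refine Subgroup.mem_inf.mpr ⟨H.mul_mem hh0 (H.inv_mem hh'),
      Subgroup.mem_centralizer_iff.mpr ?_⟩
    intro k hk
    have hkK : k ∈ K := hk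
    have hm : h⁻¹ * k * h ∈ K := by
      have h2 := (Subgroup.mem_normalizer_iff.mp (inv_mem (hHnormK h hh0)) k).mp hkK
      rwa [inv_inv] at h2
    have e1 : (h⁻¹ * k * h) * q = q * (h⁻¹ * k * h) :=
      Subgroup.mem_centralizer_iff.mp hqC _ hm
    have e2 : k * q = q * k := Subgroup.mem_centralizer_iff.mp hqC _ hkK
    have c1 : Commute (h⁻¹ * k * h) q := e1
    calc k * (h * (q⁻¹ * h * q)⁻¹)
        = h * ((h⁻¹ * k * h) * q⁻¹) * (h⁻¹ * q) := by group
      _ = h * (q⁻¹ * (h⁻¹ * k * h)) * (h⁻¹ * q) := by rw [c1.inv_right.eq]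
      _ = (h * q⁻¹ * h⁻¹) * (k * q) := by group
      _ = (h * q⁻¹ * h⁻¹) * (q * k) := by rw [e2]
      _ = (h * (q⁻¹ * h * q)⁻¹) * k := by group
  rw [hCHK, Subgroup.mem_bot] at hmem
  have he : h = q⁻¹ * h * q := mul_inv_eq_one.mp hmem
  calc h * q = q * (q⁻¹ * h * q) := by group
    _ = q * h := by rw [← he]

end St3Aux

open scoped commutatorElement

theorem statement3 (hH1 : HypH1 G) (hH2 : HypH2 G) (H : Subgroup G)
    (hHL : (Subgroup.normalizer (H : Set G)).FiniteIndex) :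
    H ⊓ Subgroup.centralizer (H : Set G) = ⊥ ∧
      ∃ G₀ : Subgroup G, G₀.FiniteIndex ∧
        ⁅G₀, G₀⁆ ≤ H ⊔ Subgroup.centralizer (H : Set G) := by
  classical
  have hNC : Subgroup.normalizer (H : Set G) ≤ Subgroup.normalizer ((H ⊓ Subgroup.centralizer (H : Set G) : Subgroup G) : Set G) := fun n hn =>
    St3Aux.mem_normalizer_inf hn (St3Aux.mem_normalizer_centralizer hn)
  have parta : H ⊓ Subgroup.centralizer (H : Set G) = ⊥ :=
    St3Aux.triv_of_abelian hH1 (St3Aux.normalizer_finiteIndex hHL hNC)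
      (fun x hx y hy => Subgroup.mem_centralizer_iff.mp hy.2 x hx.1)
  refine ⟨parta, ?_⟩
  by_cases hHbot : H = ⊥
  · refine ⟨⊤, ⟨by simp⟩, ?_⟩
    have hCtop : Subgroup.centralizer (H : Set G) = ⊤ := by
      rw [hHbot]
      ext x
      simp [Subgroup.mem_centralizer_iff]
    exact le_trans le_top (hCtop ▸ le_sup_right)
  -- main case
  haveI := hHL
  have hDfi : (Subgroup.normalizer (H : Set G)).normalCore.FiniteIndex := inferInstance
  set D := (Subgroup.normalizer (H : Set G)).normalCore with hD
  have hDnormal : D.Normal := Subgroup.normalCore_normal _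
  have hDleN : D ≤ Subgroup.normalizer (H : Set G) := Subgroup.normalCore_le _
  set K := H ⊓ D with hK
  have hKH : K ≤ H := inf_le_left
  have hKD : K ≤ D := inf_le_right
  have hDnormHg : ∀ (g : G), ∀ d ∈ D, d ∈ Subgroup.normalizer ((conjBy H g : Subgroup G) : Set G) := by
    intro g d hd
    rw [Subgroup.mem_normalizer_iff]
    intro x
    rw [St3Aux.mem_conjBy, St3Aux.mem_conjBy]
    have hgd : g * d * g⁻¹ ∈ Subgroup.normalizer (H : Set G) := hDleN (hDnormal.conj_mem d hd g)
    have h2 := Subgroup.mem_normalizer_iff.mp hgd (g * x * g⁻¹)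
    have e : (g * d * g⁻¹) * (g * x * g⁻¹) * (g * d * g⁻¹)⁻¹ = g * (d * x * d⁻¹) * g⁻¹ := by
      group
    rwa [e] at h2
  have hDnormK : ∀ d ∈ D, d ∈ Subgroup.normalizer (K : Set G) := fun d hd =>
    St3Aux.mem_normalizer_inf (hDleN hd) (Subgroup.le_normalizer hd)
  have hKgEq : ∀ g : G, conjBy K g = conjBy H g ⊓ D := by
    intro g
    rw [hK, St3Aux.conjBy_inf, St3Aux.conjBy_of_normal hDnormal]
  have hDnormKg : ∀ (g : G), ∀ d ∈ D, d ∈ Subgroup.normalizer ((conjBy K g : Subgroup G) : Set G) := by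
    intro g d hd
    rw [hKgEq g]
    exact St3Aux.mem_normalizer_inf (hDnormHg g d hd) (Subgroup.le_normalizer hd)
  have hHnormK : ∀ h ∈ H, h ∈ Subgroup.normalizer (K : Set G) := by
    intro h hh
    have hD' : h ∈ Subgroup.normalizer (D : Set G) := by
      rw [Subgroup.normalizer_eq_top_iff.mpr hDnormal]
      exact Subgroup.mem_top h
    exact St3Aux.mem_normalizer_inf (Subgroup.le_normalizer hh) hD'
  have hZK : K ⊓ Subgroup.centralizer (K : Set G) = ⊥ := by
    apply St3Aux.triv_of_abelian hH1
    · apply St3Aux.normalizer_finiteIndex hDfi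
      intro d hd
      exact St3Aux.mem_normalizer_inf (hDnormK d hd)
        (St3Aux.mem_normalizer_centralizer (hDnormK d hd))
    · intro x hx y hy
      exact Subgroup.mem_centralizer_iff.mp hy.2 x hx.1
  have hCHK : H ⊓ Subgroup.centralizer (K : Set G) = ⊥ := by
    have hdisj : (H ⊓ Subgroup.centralizer (K : Set G)) ⊓ D = ⊥ := by
      rw [eq_bot_iff]
      rintro x ⟨⟨hxH, hxC⟩, hxD⟩
      have hx2 : x ∈ K ⊓ Subgroup.centralizer (K : Set G) := ⟨⟨hxH, hxD⟩, hxC⟩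
      rw [hZK] at hx2
      exact hx2
    apply St3Aux.triv_of_finite hH1
    · apply St3Aux.normalizer_finiteIndex hDfi
      intro d hd
      exact St3Aux.mem_normalizer_inf (hDleN hd)
        (St3Aux.mem_normalizer_centralizer (hDnormK d hd))
    · exact St3Aux.finite_of_disjoint hDfi hdisj
  have hKbot : K ≠ ⊥ := by
    intro hk
    have hfinH : Finite ↥H := St3Aux.finite_of_disjoint hDfi (hk : H ⊓ D = ⊥)
    exact hHbot (St3Aux.triv_of_finite hH1 hHL hfinH)
  -- finiteness of the set of conjugates of K
  have hRfin : (Set.range fun g => conjBy K g).Finite := by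
    have hconst : ∀ (a d : G), d ∈ D → conjBy K (a * d) = conjBy K a := by
      intro a d hd
      rw [← St3Aux.conjBy_conjBy, St3Aux.conjBy_eq_of_mem_normalizer (hDnormKg a d hd)]
    let f : G ⧸ D → Subgroup G := Quotient.lift (fun g => conjBy K g) (by
      intro a b hab
      have hab' : a⁻¹ * b ∈ D := QuotientGroup.leftRel_apply.mp hab
      have h3 := hconst a (a⁻¹ * b) hab'
      rw [mul_inv_cancel_left] at h3
      exact h3.symm)
    have hsub : (Set.range fun g => conjBy K g) ⊆ Set.range f := by
      rintro _ ⟨g, rfl⟩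
      exact ⟨QuotientGroup.mk g, rfl⟩
    exact (Set.finite_range f).subset hsub
  set R : Set (Subgroup G) := Set.range (fun g => conjBy K g) with hR
  have hKR : K ∈ R := ⟨1, St3Aux.conjBy_one K⟩
  set Ts : Set (Set (Subgroup G)) := {T | T ⊆ R ∧ K ∈ T ∧ sInf T ≠ ⊥} with hTs
  have hTsfin : Ts.Finite := hRfin.finite_subsets.subset fun T hT => hT.1
  have hTsne : Ts.Nonempty := by
    refine ⟨{K}, Set.singleton_subset_iff.mpr hKR, rfl, ?_⟩
    rw [sInf_singleton]
    exact hKbot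
  obtain ⟨T, hT, hTmax0⟩ := Set.Finite.exists_maximalFor Set.ncard Ts hTsfin hTsne
  have hTmax : ∀ T' ∈ Ts, T'.ncard ≤ T.ncard := by
    intro T' hT'
    by_contra hlt
    push_neg at hlt
    exact absurd (hTmax0 hT' hlt.le) (not_le.mpr hlt)
  set B := sInf T with hB
  have hBbot : B ≠ ⊥ := hT.2.2
  have hBK : B ≤ K := sInf_le hT.2.1
  -- the dichotomy
  have hdich : ∀ g : G, conjBy B g ≤ H ∨ conjBy B g ≤ Subgroup.centralizer (H : Set G) := by
    intro g
    set img := (fun P => conjBy P g) '' T with himg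
    have himgR : img ⊆ R := by
      rintro _ ⟨P, hP, rfl⟩
      obtain ⟨a, rfl⟩ := hT.1 hP
      exact ⟨a * g, (St3Aux.conjBy_conjBy K a g).symm⟩
    have hBg : conjBy B g = sInf img := St3Aux.conjBy_sInf T g
    by_cases hcase : conjBy B g ⊓ K = ⊥
    · -- centralizer case
      right
      intro x hx
      have hxD : x ∈ D := by
        have h1 : conjBy B g ≤ conjBy K g := St3Aux.conjBy_mono hBK g
        have h2 : conjBy K g ≤ D := by
          rw [hKgEq g]; exact inf_le_right
        exact h2 (h1 hx)
      have hxNK : x ∈ Subgroup.normalizer (K : Set G) := hDnormK x hxD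
      have hDnormBg : ∀ k ∈ D, k ∈ Subgroup.normalizer ((conjBy B g : Subgroup G) : Set G) := by
        intro k hk
        rw [hBg]
        apply St3Aux.mem_normalizer_sInf
        rintro _ ⟨P, hP, rfl⟩
        obtain ⟨a, rfl⟩ := hT.1 hP
        show k ∈ Subgroup.normalizer ((conjBy (conjBy K a) g : Subgroup G) : Set G)
        rw [St3Aux.conjBy_conjBy]
        exact hDnormKg (a * g) k hk
      have hxCK : x ∈ Subgroup.centralizer (K : Set G) := by
        rw [Subgroup.mem_centralizer_iff]
        intro k hk
        have hkK : k ∈ K := hk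
        have hcomm : ⁅x, k⁆ = 1 := by
          have hc1 : ⁅x, k⁆ ∈ K := by
            rw [commutatorElement_def]
            exact K.mul_mem ((Subgroup.mem_normalizer_iff.mp hxNK k).mp hkK) (K.inv_mem hkK)
          have hc2 : ⁅x, k⁆ ∈ conjBy B g := by
            have e : ⁅x, k⁆ = x * (k * x⁻¹ * k⁻¹) := by
              rw [commutatorElement_def]; group
            rw [e]
            exact (conjBy B g).mul_mem hx
              ((Subgroup.mem_normalizer_iff.mp (hDnormBg k (hKD hkK)) x⁻¹).mp
                ((conjBy B g).inv_mem hx))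
          have hcm : ⁅x, k⁆ ∈ conjBy B g ⊓ K := ⟨hc2, hc1⟩
          rw [hcase] at hcm
          exact hcm
        exact (commutatorElement_eq_one_iff_mul_comm.mp hcomm).symm
      exact St3Aux.mem_centralizer_of hHnormK hCHK (hDleN hxD) hxCK
    · -- H case
      left
      set T' := img ∪ {K} with hT'
      have hT'Ts : T' ∈ Ts := by
        refine ⟨Set.union_subset himgR (Set.singleton_subset_iff.mpr hKR),
          Set.mem_union_right _ rfl, ?_⟩
        rw [sInf_union, sInf_singleton, ← hBg]
        exact hcase
      have hT'fin : T'.Finite := hRfin.subset hT'Ts.1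
      have hcard1 : img.ncard = T.ncard :=
        Set.ncard_image_of_injective T (St3Aux.conjBy_left_injective g)
      have hsub : img ⊆ T' := Set.subset_union_left
      have hcard2 : T'.ncard ≤ img.ncard := by
        rw [hcard1]
        exact hTmax T' hT'Ts
      have heq : img = T' := Set.eq_of_subset_of_ncard_le hsub hcard2 hT'fin
      have hKimg : K ∈ img := heq ▸ Set.mem_union_right img rfl
      calc conjBy B g = sInf img := hBg
        _ ≤ K := sInf_le hKimg
        _ ≤ H := hKH
  -- the normal closure of B
  set N := ⨆ g : G, conjBy B g with hN
  have hBN : B ≤ N := by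
    have h1 := le_iSup (fun g => conjBy B g) 1
    rwa [St3Aux.conjBy_one] at h1
  have hNbot : N ≠ ⊥ := fun h => hBbot (le_bot_iff.mp (h ▸ hBN))
  have hNnormal : N.Normal := by
    constructor
    intro x hx g
    have hle : N ≤ conjBy N g := by
      apply iSup_le
      intro a
      have h1 : conjBy B a = conjBy (conjBy B (a * g⁻¹)) g := by
        rw [St3Aux.conjBy_conjBy, inv_mul_cancel_right]
      rw [h1]
      exact St3Aux.conjBy_mono (le_iSup (fun g => conjBy B g) (a * g⁻¹)) g
    exact St3Aux.mem_conjBy.mp (hle hx)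
  have hNle : N ≤ H ⊔ Subgroup.centralizer (H : Set G) := by
    apply iSup_le
    intro g
    rcases hdich g with h | h
    · exact h.trans le_sup_left
    · exact h.trans le_sup_right
  obtain ⟨G₀, hG₀fi, hG₀le⟩ := hH2 N hNnormal hNbot
  exact ⟨G₀, hG₀fi, hG₀le.trans hNle⟩
end

section
/- Let G be a group satisfying (H1) and let H, K ∈ L(G). If H ∩ K ≤va H and H ∩ K ≤va K, then C_G(H) = C_G(K). -/
variable {G : Type*} [Group G]

section GWHelpers

variable {G : Type*} [Group G]

open Subgroup
open scoped commutatorElement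

variable {G : Type*} [Group G]

/-- Conjugate `g S g⁻¹`. -/
def cj (g : G) (S : Subgroup G) : Subgroup G := S.map (MulAut.conj g).toMonoidHom

lemma mem_cj {g x : G} {S : Subgroup G} : x ∈ cj g S ↔ g⁻¹ * x * g ∈ S := by
  constructor
  · rintro ⟨y, hy, rfl⟩
    have he : g⁻¹ * (MulEquiv.toMonoidHom (MulAut.conj g)) y * g = y := by
      simp only [MulEquiv.coe_toMonoidHom, MulAut.conj_apply]
      group
    rwa [he]
  · intro h
    refine ⟨g⁻¹ * x * g, h, ?_⟩
    show MulAut.conj g (g⁻¹ * x * g) = x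
    simp only [MulAut.conj_apply]
    group

lemma cj_eq_comap (g : G) (S : Subgroup G) :
    cj g S = S.comap (MulAut.conj g⁻¹).toMonoidHom := by
  ext x
  simp [mem_cj, Subgroup.mem_comap]

lemma cj_mul (a b : G) (S : Subgroup G) : cj (a * b) S = cj a (cj b S) := by
  ext x
  simp [mem_cj, mul_assoc]

lemma cj_mono {A B : Subgroup G} (g : G) (h : A ≤ B) : cj g A ≤ cj g B :=
  Subgroup.map_mono h

lemma cj_bot (g : G) : cj g (⊥ : Subgroup G) = ⊥ := by
  simp [cj]

lemma cj_inf (g : G) (A B : Subgroup G) : cj g (A ⊓ B) = cj g A ⊓ cj g B := by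
  ext x; simp [mem_cj, Subgroup.mem_inf]

lemma cj_sup (g : G) (A B : Subgroup G) : cj g (A ⊔ B) = cj g A ⊔ cj g B := by
  simp [cj, Subgroup.map_sup]

lemma cj_normalizer (g : G) (S : Subgroup G) :
    cj g (Subgroup.normalizer (S : Set G)) = (Subgroup.normalizer ((cj g S : Subgroup G) : Set G)) :=
  Subgroup.map_equiv_normalizer_eq S (MulAut.conj g)

lemma cj_centralizer (g : G) (S : Subgroup G) :
    cj g (Subgroup.centralizer (S : Set G)) = Subgroup.centralizer ((cj g S : Subgroup G) : Set G) := by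
  ext x
  rw [mem_cj, Subgroup.mem_centralizer_iff, Subgroup.mem_centralizer_iff]
  constructor
  · intro h t ht
    have ht' : g⁻¹ * t * g ∈ S := mem_cj.mp ht
    have := h _ ht'
    -- (g⁻¹ t g) (g⁻¹ x g) = (g⁻¹ x g)(g⁻¹ t g)  ⟹ t x = x t
    have h2 : g * ((g⁻¹ * t * g) * (g⁻¹ * x * g)) * g⁻¹ = g * ((g⁻¹ * x * g) * (g⁻¹ * t * g)) * g⁻¹ := by
      rw [this]
    calc t * x = g * ((g⁻¹ * t * g) * (g⁻¹ * x * g)) * g⁻¹ := by group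
    _ = g * ((g⁻¹ * x * g) * (g⁻¹ * t * g)) * g⁻¹ := h2
    _ = x * t := by group
  · intro h s hs
    have hgs : g * s * g⁻¹ ∈ cj g S := by
      rw [mem_cj]
      have : g⁻¹ * (g * s * g⁻¹) * g = s := by group
      rw [this]; exact hs
    have := h _ hgs
    -- (g s g⁻¹) x = x (g s g⁻¹) ⟹ s (g⁻¹ x g) = (g⁻¹ x g) s
    have h2 : g⁻¹ * ((g * s * g⁻¹) * x) * g = g⁻¹ * (x * (g * s * g⁻¹)) * g := by rw [this]
    calc s * (g⁻¹ * x * g) = g⁻¹ * ((g * s * g⁻¹) * x) * g := by group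
    _ = g⁻¹ * (x * (g * s * g⁻¹)) * g := h2
    _ = (g⁻¹ * x * g) * s := by group

lemma cj_commutator (g : G) (A B : Subgroup G) :
    cj g ⁅A, B⁆ = ⁅cj g A, cj g B⁆ :=
  Subgroup.map_commutator A B _

lemma cj_index (g : G) (S : Subgroup G) : (cj g S).index = S.index := by
  rw [cj_eq_comap, Subgroup.index_comap_of_surjective _ (MulEquiv.surjective _)]

lemma cj_relindex (g : G) (A B : Subgroup G) :
    (cj g A).relIndex B = A.relIndex (cj g⁻¹ B) := by
  rw [cj_eq_comap, Subgroup.relIndex_comap]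
  rfl

lemma cj_finiteIndex (g : G) {S : Subgroup G} (h : S.FiniteIndex) : (cj g S).FiniteIndex :=
  ⟨by rw [cj_index]; exact h.index_ne_zero⟩

lemma mem_normalizer_iff_cj {g : G} {S : Subgroup G} : g ∈ (Subgroup.normalizer (S : Set G)) ↔ cj g S = S := by
  constructor
  · intro hg
    ext x
    rw [mem_cj]
    constructor
    · intro hxs
      have := (Subgroup.mem_normalizer_iff.mp hg (g⁻¹ * x * g)).mp hxs
      have he : g * (g⁻¹ * x * g) * g⁻¹ = x := by group
      rwa [he] at this
    · intro hxs
      have := (Subgroup.mem_normalizer_iff.mp ((Subgroup.normalizer (S : Set G)).inv_mem hg) x).mp hxs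
      have he : g⁻¹ * x * g⁻¹⁻¹ = g⁻¹ * x * g := by group
      rwa [he] at this
  · intro h
    rw [Subgroup.mem_normalizer_iff]
    intro x
    constructor
    · intro hx
      have : g * x * g⁻¹ ∈ cj g S := by
        rw [mem_cj]
        have he : g⁻¹ * (g * x * g⁻¹) * g = x := by group
        rwa [he]
      rwa [h] at this
    · intro hx
      rw [← h, mem_cj] at hx
      have he : g⁻¹ * (g * x * g⁻¹) * g = x := by group
      rwa [he] at hx

lemma cj_eq_self_of_normal (g : G) {S : Subgroup G} (h : S.Normal) : cj g S = S := by
  ext x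
  rw [mem_cj]
  constructor
  · intro hx
    have := h.conj_mem _ hx g
    have he : g * (g⁻¹ * x * g) * g⁻¹ = x := by group
    rwa [he] at this
  · intro hx
    have := h.conj_mem _ hx g⁻¹
    have he : g⁻¹ * x * g⁻¹⁻¹ = g⁻¹ * x * g := by group
    rwa [he] at this

lemma cj_eq_self_of_mem_centralizer {c : G} {S : Subgroup G}
    (hc : c ∈ Subgroup.centralizer (S : Set G)) : cj c S = S := by
  ext x
  rw [mem_cj]
  constructor
  · intro hx
    have hcomm := Subgroup.mem_centralizer_iff.mp hc _ hx
    have h1 : c * (c⁻¹ * x * c) * c⁻¹ = x := by group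
    have h2 : c * (c⁻¹ * x * c) * c⁻¹ = c⁻¹ * x * c := by
      rw [show c * (c⁻¹ * x * c) * c⁻¹ = (c * (c⁻¹ * x * c)) * c⁻¹ from by group, ← hcomm]
      group
    rw [show x = c⁻¹ * x * c from h1.symm.trans h2]
    exact hx
  · intro hx
    have hcomm := Subgroup.mem_centralizer_iff.mp hc _ hx
    have he : c⁻¹ * x * c = c⁻¹ * (x * c) := by group
    rw [he, hcomm]
    have he2 : c⁻¹ * (c * x) = x := by group
    rw [he2]; exact hx

lemma fin_of_le {A B : Subgroup G} (h : A ≤ B) (hA : A.FiniteIndex) : B.FiniteIndex := by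
  refine ⟨fun h0 => hA.index_ne_zero ?_⟩
  have hd := Subgroup.index_dvd_of_le h
  rw [h0] at hd
  exact zero_dvd_iff.mp hd

lemma normalizer_inf_le (A B : Subgroup G) :
    (Subgroup.normalizer (A : Set G)) ⊓ (Subgroup.normalizer (B : Set G)) ≤ (Subgroup.normalizer ((A ⊓ B : Subgroup G) : Set G)) := by
  intro g hg
  rw [Subgroup.mem_inf] at hg
  obtain ⟨ha, hb⟩ := hg
  rw [mem_normalizer_iff_cj] at ha hb ⊢
  rw [cj_inf, ha, hb]

lemma normalizer_sup_le (A B : Subgroup G) :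
    (Subgroup.normalizer (A : Set G)) ⊓ (Subgroup.normalizer (B : Set G)) ≤ (Subgroup.normalizer ((A ⊔ B : Subgroup G) : Set G)) := by
  intro g hg
  rw [Subgroup.mem_inf] at hg
  obtain ⟨ha, hb⟩ := hg
  rw [mem_normalizer_iff_cj] at ha hb ⊢
  rw [cj_sup, ha, hb]

lemma normalizer_le_centralizer_normalizer (S : Subgroup G) :
    (Subgroup.normalizer (S : Set G)) ≤ (Subgroup.normalizer ((Subgroup.centralizer (S : Set G) : Subgroup G) : Set G)) := by
  intro g hg
  rw [mem_normalizer_iff_cj] at hg ⊢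
  rw [cj_centralizer, hg]

lemma commutator_le_self (S : Subgroup G) : ⁅S, S⁆ ≤ S := by
  rw [Subgroup.commutator_le]
  intro a ha b hb
  rw [commutatorElement_def]
  exact mul_mem (mul_mem (mul_mem ha hb) (S.inv_mem ha)) (S.inv_mem hb)

/-- metabelian criterion -/
lemma isSolvable_of_metab {M Y : Subgroup G} (hMY : ⁅M, M⁆ ≤ Y)
    (hMC : M ≤ Subgroup.centralizer (Y : Set G)) : IsSolvable ↥M := by
  have hMM : ⁅M, M⁆ ≤ M := _root_.commutator_le_self M
  have hsub : ((⁅M, M⁆ : Subgroup G) : Set G) ⊆ (Y : Set G) := hMY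
  have hcent : ⁅M, M⁆ ≤ Subgroup.centralizer ((⁅M, M⁆ : Subgroup G) : Set G) :=
    le_trans (le_trans hMM hMC) (Subgroup.centralizer_le hsub)
  have hbot : ⁅(⁅M, M⁆ : Subgroup G), (⁅M, M⁆ : Subgroup G)⁆ = ⊥ :=
    Subgroup.commutator_eq_bot_iff_le_centralizer.mpr hcent
  refine ⟨⟨2, ?_⟩⟩
  have hinj : Function.Injective M.subtype := Subtype.coe_injective
  have hmap1 : Subgroup.map M.subtype (derivedSeries ↥M 1) ≤ ⁅M, M⁆ := by
    rw [derivedSeries_succ, derivedSeries_zero, Subgroup.map_commutator]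
    have : Subgroup.map M.subtype ⊤ = M := by
      rw [← MonoidHom.range_eq_map, Subgroup.range_subtype]
    rw [this]
  have hle : Subgroup.map M.subtype (derivedSeries ↥M 2) ≤ ⊥ := by
    rw [derivedSeries_succ, Subgroup.map_commutator, ← hbot]
    exact Subgroup.commutator_mono hmap1 hmap1
  exact (Subgroup.map_eq_bot_iff_of_injective _ hinj).mp (le_bot_iff.mp hle)

/-- The hammer: under (H1), if `⁅S,S⁆ ≤ W` and `S` has finite relindex in `K`,
with `K`, `W` in `L(G)`, then `K ⊓ C(W) = ⊥`. -/
lemma hammer (hH1 : HypH1 G) {K W S : Subgroup G}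
    (hKn : (Subgroup.normalizer (K : Set G)).FiniteIndex) (hWn : (Subgroup.normalizer (W : Set G)).FiniteIndex)
    (hS : S.relIndex K ≠ 0) (hSc : ⁅S, S⁆ ≤ W) :
    K ⊓ Subgroup.centralizer (W : Set G) = ⊥ := by
  set T := K ⊓ Subgroup.centralizer (W : Set G) with hT
  have hTK : T ≤ K := inf_le_left
  have hTC : T ≤ Subgroup.centralizer (W : Set G) := inf_le_right
  apply hH1 T
  · -- normalizer finite index
    have h1 : (Subgroup.normalizer (K : Set G)) ⊓ (Subgroup.normalizer ((Subgroup.centralizer (W : Set G) : Subgroup G) : Set G)) ≤ (Subgroup.normalizer (T : Set G)) :=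
      normalizer_inf_le _ _
    refine fin_of_le h1 ?_
    haveI := hKn
    haveI : (Subgroup.normalizer ((Subgroup.centralizer (W : Set G) : Subgroup G) : Set G)).FiniteIndex :=
      fin_of_le (normalizer_le_centralizer_normalizer W) hWn
    infer_instance
  · refine ⟨S ⊓ T, inf_le_right, ?_, ?_⟩
    · rw [Subgroup.inf_relIndex_right]
      intro h0
      exact hS (Subgroup.relIndex_eq_zero_of_le_right hTK h0)
    · exact isSolvable_of_metab (Y := W)
        (le_trans (Subgroup.commutator_mono inf_le_left inf_le_left) hSc)
        (le_trans inf_le_right hTC)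

lemma comm_conj_aux {c k x : G} (h1 : x * c = c * x)
    (h2 : (k * x * k⁻¹) * c = c * (k * x * k⁻¹)) :
    x * ⁅k⁻¹, c⁻¹⁆ = ⁅k⁻¹, c⁻¹⁆ * x := by
  have h2' : (k * x * k⁻¹) * c⁻¹ = c⁻¹ * (k * x * k⁻¹) := Commute.inv_right h2
  rw [commutatorElement_def, inv_inv, inv_inv]
  calc x * (k⁻¹ * c⁻¹ * k * c) = k⁻¹ * ((k * x * k⁻¹) * c⁻¹) * k * c := by group
  _ = k⁻¹ * (c⁻¹ * (k * x * k⁻¹)) * k * c := by rw [h2']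
  _ = k⁻¹ * c⁻¹ * k * (x * c) := by group
  _ = k⁻¹ * c⁻¹ * k * (c * x) := by rw [h1]
  _ = k⁻¹ * c⁻¹ * k * c * x := by group

lemma u_mem_centralizer {R : Subgroup G} {c k : G}
    (hc : c ∈ Subgroup.centralizer (R : Set G)) :
    ⁅k⁻¹, c⁻¹⁆ ∈ Subgroup.centralizer ((R ⊓ cj k⁻¹ R : Subgroup G) : Set G) := by
  rw [Subgroup.mem_centralizer_iff]
  intro x hx
  rw [SetLike.mem_coe, Subgroup.mem_inf] at hx
  obtain ⟨hxR, hxc⟩ := hx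
  have hy : k * x * k⁻¹ ∈ R := by
    rw [mem_cj] at hxc
    have he : k⁻¹⁻¹ * x * k⁻¹ = k * x * k⁻¹ := by group
    rwa [he] at hxc
  exact comm_conj_aux (Subgroup.mem_centralizer_iff.mp hc x hxR)
    (Subgroup.mem_centralizer_iff.mp hc _ hy)

/-- If `c` centralizes `R` and normalizes `K`, where `⁅A,A⁆ ≤ R` with `A` of finite
relindex in `K` and `K, R ∈ L(G)`, then `c` centralizes `K`. -/
lemma cent_of_norm (hH1 : HypH1 G) {K R A : Subgroup G}
    (hKn : (Subgroup.normalizer (K : Set G)).FiniteIndex) (hRn : (Subgroup.normalizer (R : Set G)).FiniteIndex)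
    (hArel : A.relIndex K ≠ 0) (hAc : ⁅A, A⁆ ≤ R) {c : G}
    (hc : c ∈ Subgroup.centralizer (R : Set G)) (hcN : c ∈ (Subgroup.normalizer (K : Set G))) :
    c ∈ Subgroup.centralizer (K : Set G) := by
  rw [Subgroup.mem_centralizer_iff]
  intro k hk
  rw [SetLike.mem_coe] at hk
  -- the conjugated witness
  have hcjArel : (cj k⁻¹ A).relIndex K ≠ 0 := by
    rw [cj_relindex, inv_inv]
    have hKK : cj k K = K := mem_normalizer_iff_cj.mp (Subgroup.le_normalizer hk)
    rwa [hKK]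
  have hSrel : (A ⊓ cj k⁻¹ A).relIndex K ≠ 0 :=
    Subgroup.relIndex_inf_ne_zero hArel hcjArel
  have hScomm : ⁅A ⊓ cj k⁻¹ A, A ⊓ cj k⁻¹ A⁆ ≤ R ⊓ cj k⁻¹ R := by
    refine le_inf ?_ ?_
    · exact le_trans (Subgroup.commutator_mono inf_le_left inf_le_left) hAc
    · refine le_trans (Subgroup.commutator_mono inf_le_right inf_le_right) ?_
      rw [← cj_commutator]
      exact cj_mono _ hAc
  have hWn : (Subgroup.normalizer ((R ⊓ cj k⁻¹ R : Subgroup G) : Set G)).FiniteIndex := by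
    refine fin_of_le (normalizer_inf_le _ _) ?_
    haveI := hRn
    haveI : (Subgroup.normalizer ((cj k⁻¹ R : Subgroup G) : Set G)).FiniteIndex := by
      rw [← cj_normalizer]
      exact cj_finiteIndex _ hRn
    infer_instance
  have hbot : K ⊓ Subgroup.centralizer ((R ⊓ cj k⁻¹ R : Subgroup G) : Set G) = ⊥ :=
    hammer hH1 hKn hWn hSrel hScomm
  have huK : ⁅k⁻¹, c⁻¹⁆ ∈ K := by
    rw [commutatorElement_def, inv_inv, inv_inv]
    have hck : c⁻¹ * k * c ∈ K := by
      have := (Subgroup.mem_normalizer_iff''.mp hcN k).mp hk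
      exact this
    have he : k⁻¹ * c⁻¹ * k * c = k⁻¹ * (c⁻¹ * k * c) := by group
    rw [he]
    exact mul_mem (K.inv_mem hk) hck
  have huC := u_mem_centralizer (R := R) (c := c) (k := k) hc
  have humem : ⁅k⁻¹, c⁻¹⁆ ∈ K ⊓ Subgroup.centralizer ((R ⊓ cj k⁻¹ R : Subgroup G) : Set G) :=
    Subgroup.mem_inf.mpr ⟨huK, huC⟩
  rw [hbot, Subgroup.mem_bot] at humem
  have hcomm : Commute k⁻¹ c⁻¹ := commutatorElement_eq_one_iff_commute.mp humem
  have : Commute k c := by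
    have := (hcomm.inv_left).inv_right
    rwa [inv_inv, inv_inv] at this
  exact this

lemma cj_one (S : Subgroup G) : cj 1 S = S := by
  ext x; rw [mem_cj]; simp

/-- Key lemma: if `D` is a normal subgroup of finite relindex in `X`, both in `L(G)`,
then any element centralizing `D` centralizes `X`. -/
lemma key_finite (hH1 : HypH1 G) {X D : Subgroup G}
    (hXn : (Subgroup.normalizer (X : Set G)).FiniteIndex) (hDn : (Subgroup.normalizer (D : Set G)).FiniteIndex)
    (hDX : D ≤ X) (hrel : D.relIndex X ≠ 0)
    (hnorm : ∀ g ∈ X, cj g D = D)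
    {c : G} (hc : c ∈ Subgroup.centralizer (D : Set G)) :
    c ∈ Subgroup.centralizer (X : Set G) := by
  have hcD : cj c D = D := cj_eq_self_of_mem_centralizer hc
  have hcD' : cj c⁻¹ D = D :=
    cj_eq_self_of_mem_centralizer ((Subgroup.centralizer (D : Set G)).inv_mem hc)
  set Xc := cj c⁻¹ X with hXcdef
  have hXcn : (Subgroup.normalizer (Xc : Set G)).FiniteIndex := by
    rw [hXcdef, ← cj_normalizer]
    exact cj_finiteIndex _ hXn
  have hrelXc : D.relIndex Xc ≠ 0 := by
    have h1 : (cj c⁻¹ D).relIndex Xc = D.relIndex (cj c⁻¹⁻¹ Xc) := cj_relindex _ _ _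
    rw [hcD'] at h1
    rw [h1, inv_inv, hXcdef, ← cj_mul, mul_inv_cancel, cj_one]
    exact hrel
  have hnormXc : ∀ g ∈ Xc, cj g D = D := by
    intro g hg
    rw [hXcdef, mem_cj, inv_inv] at hg
    have he : g = c⁻¹ * ((c * g * c⁻¹) * c) := by group
    rw [he, cj_mul, cj_mul, hcD, hnorm _ hg, hcD']
  -- hammer triviality
  have hXbot : X ⊓ Subgroup.centralizer (D : Set G) = ⊥ :=
    hammer hH1 hXn hDn hrel (_root_.commutator_le_self D)
  have hXcbot : Xc ⊓ Subgroup.centralizer (D : Set G) = ⊥ :=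
    hammer hH1 hXcn hDn hrelXc (_root_.commutator_le_self D)
  -- general centralizing step
  have hgen : ∀ (Y : Subgroup G), Y ⊓ Subgroup.centralizer (D : Set G) = ⊥ →
      (∀ g ∈ Y, cj g D = D) →
      ∀ w, w ∈ Subgroup.centralizer (D : Set G) → w ∈ (Subgroup.normalizer (Y : Set G)) →
      ∀ x ∈ Y, x * w = w * x := by
    intro Y hYbot hnormY w hwD hwN x hx
    have huY : ⁅x⁻¹, w⁻¹⁆ ∈ Y := by
      rw [commutatorElement_def, inv_inv, inv_inv]
      have hwx : w⁻¹ * x * w ∈ Y := by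
        have := (Subgroup.mem_normalizer_iff''.mp hwN x).mp hx
        exact this
      have he : x⁻¹ * w⁻¹ * x * w = x⁻¹ * (w⁻¹ * x * w) := by group
      rw [he]
      exact mul_mem (Y.inv_mem hx) hwx
    have huC : ⁅x⁻¹, w⁻¹⁆ ∈ Subgroup.centralizer (D : Set G) := by
      have h2 := u_mem_centralizer (R := D) (c := w) (k := x) hwD
      rwa [hnormY x⁻¹ (Y.inv_mem hx), inf_idem] at h2
    have humem : ⁅x⁻¹, w⁻¹⁆ ∈ Y ⊓ Subgroup.centralizer (D : Set G) :=
      Subgroup.mem_inf.mpr ⟨huY, huC⟩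
    rw [hYbot, Subgroup.mem_bot] at humem
    have hcomm : Commute x⁻¹ w⁻¹ := commutatorElement_eq_one_iff_commute.mp humem
    have : Commute x w := by
      have := (hcomm.inv_left).inv_right
      rwa [inv_inv, inv_inv] at this
    exact this
  -- the virtually abelian subgroup V
  set J := X ⊔ Xc with hJdef
  set V := J ⊓ Subgroup.centralizer (D : Set G) with hVdef
  set Nx := ((Subgroup.normalizer (X : Set G)) ⊓ (Subgroup.normalizer (D : Set G))).normalCore with hNxdef
  haveI := hXn
  haveI := hDn
  haveI hNxfin : Nx.FiniteIndex := Subgroup.finiteIndex_normalCore _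
  have hNxle : Nx ≤ (Subgroup.normalizer (X : Set G)) ⊓ (Subgroup.normalizer (D : Set G)) := Subgroup.normalCore_le _
  have hNxnormal : Nx.Normal := Subgroup.normalCore_normal _
  have habel : ∀ a ∈ Nx ⊓ V, ∀ b ∈ Nx ⊓ V, a * b = b * a := by
    intro a ha b hb
    obtain ⟨haN, haV⟩ := Subgroup.mem_inf.mp ha
    obtain ⟨hbN, hbV⟩ := Subgroup.mem_inf.mp hb
    obtain ⟨haJ, haD⟩ := Subgroup.mem_inf.mp haV
    obtain ⟨hbJ, hbD⟩ := Subgroup.mem_inf.mp hbV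
    have haNX : a ∈ (Subgroup.normalizer (X : Set G)) := (hNxle haN).1
    have haNXc : a ∈ (Subgroup.normalizer (Xc : Set G)) := by
      rw [hXcdef, ← cj_normalizer, mem_cj, inv_inv]
      have hconj : c * a * c⁻¹ ∈ Nx := hNxnormal.conj_mem a haN c
      exact (hNxle hconj).1
    have hJcent : J ≤ Subgroup.centralizer ({a} : Set G) := by
      rw [hJdef]
      refine sup_le ?_ ?_
      · intro x hx
        rw [Subgroup.mem_centralizer_iff]
        intro h hh
        rw [Set.mem_singleton_iff] at hh
        rw [hh]
        exact (hgen X hXbot hnorm a haD haNX x hx).symm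
      · intro x hx
        rw [Subgroup.mem_centralizer_iff]
        intro h hh
        rw [Set.mem_singleton_iff] at hh
        rw [hh]
        exact (hgen Xc hXcbot hnormXc a haD haNXc x hx).symm
    exact Subgroup.mem_centralizer_iff.mp (hJcent hbJ) a (Set.mem_singleton a)
  have hVn : (Subgroup.normalizer (V : Set G)).FiniteIndex := by
    have h1 : (Subgroup.normalizer (J : Set G)).FiniteIndex := by
      refine fin_of_le (normalizer_sup_le X Xc) ?_
      haveI := hXcn
      infer_instance
    have h2 : (Subgroup.normalizer ((Subgroup.centralizer (D : Set G) : Subgroup G) : Set G)).FiniteIndex :=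
      fin_of_le (normalizer_le_centralizer_normalizer D) hDn
    refine fin_of_le (normalizer_inf_le J (Subgroup.centralizer (D : Set G))) ?_
    haveI := h1
    haveI := h2
    infer_instance
  have hVbot : V = ⊥ := by
    apply hH1 V hVn
    refine ⟨Nx ⊓ V, inf_le_right, ?_, ?_⟩
    · rw [Subgroup.inf_relIndex_right]
      intro h0
      have hdvd := Subgroup.relIndex_dvd_index_of_normal (H := Nx) (K := V)
      rw [h0] at hdvd
      exact hNxfin.index_ne_zero (zero_dvd_iff.mp hdvd)
    · exact isSolvable_of_comm fun a b => Subtype.ext (habel a a.2 b b.2)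
  -- conclude
  rw [Subgroup.mem_centralizer_iff]
  intro x hx
  rw [SetLike.mem_coe] at hx
  have hvV : ⁅x⁻¹, c⁻¹⁆ ∈ V := by
    refine Subgroup.mem_inf.mpr ⟨?_, ?_⟩
    · rw [commutatorElement_def, inv_inv, inv_inv]
      have he : x⁻¹ * c⁻¹ * x * c = x⁻¹ * (c⁻¹ * x * c) := by group
      rw [he, hJdef]
      refine mul_mem ((le_sup_left : X ≤ X ⊔ Xc) (X.inv_mem hx)) ((le_sup_right : Xc ≤ X ⊔ Xc) ?_)
      rw [hXcdef, mem_cj, inv_inv]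
      have he2 : c * (c⁻¹ * x * c) * c⁻¹ = x := by group
      rw [he2]
      exact hx
    · have h2 := u_mem_centralizer (R := D) (c := c) (k := x) hc
      rwa [hnorm x⁻¹ (X.inv_mem hx), inf_idem] at h2
  rw [hVbot, Subgroup.mem_bot] at hvV
  have hcomm : Commute x⁻¹ c⁻¹ := commutatorElement_eq_one_iff_commute.mp hvV
  have : Commute x c := by
    have := (hcomm.inv_left).inv_right
    rwa [inv_inv, inv_inv] at this
  exact this

lemma le_centralizer_centralizer' (S : Subgroup G) :
    S ≤ Subgroup.centralizer ((Subgroup.centralizer (S : Set G) : Subgroup G) : Set G) := by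
  intro s hs
  rw [Subgroup.mem_centralizer_iff]
  intro m hm
  rw [SetLike.mem_coe] at hm
  exact (Subgroup.mem_centralizer_iff.mp hm s hs).symm

theorem statement4' (hH1 : HypH1 G) (H K : Subgroup G)
    (hHL : (Subgroup.normalizer (H : Set G)).FiniteIndex) (hKL : (Subgroup.normalizer (K : Set G)).FiniteIndex)
    (h1 : (H ⊓ K) ≤ H ∧ ∃ A : Subgroup G, A ≤ H ∧ A.relIndex H ≠ 0 ∧ ⁅A, A⁆ ≤ H ⊓ K)
    (h2 : (H ⊓ K) ≤ K ∧ ∃ A : Subgroup G, A ≤ K ∧ A.relIndex K ≠ 0 ∧ ⁅A, A⁆ ≤ H ⊓ K) :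
    Subgroup.centralizer (H : Set G) = Subgroup.centralizer (K : Set G) := by
  obtain ⟨-, A1, hA1H, hA1rel, hA1c⟩ := h1
  obtain ⟨-, A2, hA2K, hA2rel, hA2c⟩ := h2
  haveI := hHL
  haveI := hKL
  set N0 := ((Subgroup.normalizer (H : Set G)) ⊓ (Subgroup.normalizer (K : Set G))).normalCore with hN0def
  haveI hN0fin : N0.FiniteIndex := Subgroup.finiteIndex_normalCore _
  have hN0le : N0 ≤ (Subgroup.normalizer (H : Set G)) ⊓ (Subgroup.normalizer (K : Set G)) := Subgroup.normalCore_le _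
  have hN0normal : N0.Normal := Subgroup.normalCore_normal _
  have hHKn : (Subgroup.normalizer ((H ⊓ K : Subgroup G) : Set G)).FiniteIndex :=
    fin_of_le (normalizer_inf_le H K) inferInstance
  set CH := Subgroup.centralizer (H : Set G) with hCHdef
  set CK := Subgroup.centralizer (K : Set G) with hCKdef
  -- step 3: almost-containments
  have h3a : CH ⊓ N0 ≤ CK := by
    intro x hx
    obtain ⟨hxH, hxN⟩ := Subgroup.mem_inf.mp hx
    have hsub : ((H ⊓ K : Subgroup G) : Set G) ⊆ (H : Set G) :=
      SetLike.coe_subset_coe.mpr inf_le_left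
    have hxHK : x ∈ Subgroup.centralizer ((H ⊓ K : Subgroup G) : Set G) :=
      Subgroup.centralizer_le hsub hxH
    exact cent_of_norm hH1 hKL hHKn hA2rel hA2c hxHK ((hN0le hxN).2)
  have h3b : CK ⊓ N0 ≤ CH := by
    intro x hx
    obtain ⟨hxK, hxN⟩ := Subgroup.mem_inf.mp hx
    have hsub : ((H ⊓ K : Subgroup G) : Set G) ⊆ (K : Set G) :=
      SetLike.coe_subset_coe.mpr inf_le_right
    have hxHK : x ∈ Subgroup.centralizer ((H ⊓ K : Subgroup G) : Set G) :=
      Subgroup.centralizer_le hsub hxK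
    exact cent_of_norm hH1 hHL hHKn hA1rel hA1c hxHK ((hN0le hxN).1)
  -- the common finite-relindex subgroup
  set I := CH ⊓ CK with hIdef
  set DH := CH ⊓ N0 with hDHdef
  set DK := CK ⊓ N0 with hDKdef
  have hDHI : DH ≤ I := le_inf inf_le_left h3a
  have hDKI : DK ≤ I := le_inf h3b inf_le_left
  have hCHn : (Subgroup.normalizer (CH : Set G)).FiniteIndex :=
    fin_of_le (normalizer_le_centralizer_normalizer H) hHL
  have hCKn : (Subgroup.normalizer (CK : Set G)).FiniteIndex :=
    fin_of_le (normalizer_le_centralizer_normalizer K) hKL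
  haveI hN0nfin : (Subgroup.normalizer (N0 : Set G)).FiniteIndex := by
    rw [Subgroup.normalizer_eq_top_iff.mpr hN0normal]
    infer_instance
  have hDHn : (Subgroup.normalizer (DH : Set G)).FiniteIndex := by
    refine fin_of_le (normalizer_inf_le CH N0) ?_
    haveI := hCHn
    infer_instance
  have hDKn : (Subgroup.normalizer (DK : Set G)).FiniteIndex := by
    refine fin_of_le (normalizer_inf_le CK N0) ?_
    haveI := hCKn
    infer_instance
  have hDHrel : DH.relIndex CH ≠ 0 := by
    rw [hDHdef, inf_comm, Subgroup.inf_relIndex_right]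
    intro h0
    have hdvd := Subgroup.relIndex_dvd_index_of_normal (H := N0) (K := CH)
    rw [h0] at hdvd
    exact hN0fin.index_ne_zero (zero_dvd_iff.mp hdvd)
  have hDKrel : DK.relIndex CK ≠ 0 := by
    rw [hDKdef, inf_comm, Subgroup.inf_relIndex_right]
    intro h0
    have hdvd := Subgroup.relIndex_dvd_index_of_normal (H := N0) (K := CK)
    rw [h0] at hdvd
    exact hN0fin.index_ne_zero (zero_dvd_iff.mp hdvd)
  have hDHnorm : ∀ g ∈ CH, cj g DH = DH := by
    intro g hg
    rw [hDHdef, cj_inf, cj_eq_self_of_normal g hN0normal,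
      mem_normalizer_iff_cj.mp (Subgroup.le_normalizer hg)]
  have hDKnorm : ∀ g ∈ CK, cj g DK = DK := by
    intro g hg
    rw [hDKdef, cj_inf, cj_eq_self_of_normal g hN0normal,
      mem_normalizer_iff_cj.mp (Subgroup.le_normalizer hg)]
  -- double centralizer sandwiches
  have hIH : Subgroup.centralizer (I : Set G) = Subgroup.centralizer (CH : Set G) := by
    apply le_antisymm
    · intro x hx
      refine key_finite hH1 hCHn hDHn inf_le_left hDHrel hDHnorm ?_
      exact Subgroup.centralizer_le (SetLike.coe_subset_coe.mpr hDHI) hx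
    · exact Subgroup.centralizer_le (SetLike.coe_subset_coe.mpr inf_le_left)
  have hIK : Subgroup.centralizer (I : Set G) = Subgroup.centralizer (CK : Set G) := by
    apply le_antisymm
    · intro x hx
      refine key_finite hH1 hCKn hDKn inf_le_left hDKrel hDKnorm ?_
      exact Subgroup.centralizer_le (SetLike.coe_subset_coe.mpr hDKI) hx
    · exact Subgroup.centralizer_le (SetLike.coe_subset_coe.mpr inf_le_right)
  -- finish
  apply le_antisymm
  · intro cc hcc
    rw [hCKdef, Subgroup.mem_centralizer_iff]
    intro k hk
    rw [SetLike.mem_coe] at hk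
    have hk1 : k ∈ Subgroup.centralizer (CK : Set G) := le_centralizer_centralizer' K hk
    rw [← hIK, hIH] at hk1
    exact (Subgroup.mem_centralizer_iff.mp hk1 cc hcc).symm
  · intro cc hcc
    rw [hCHdef, Subgroup.mem_centralizer_iff]
    intro hh hhm
    rw [SetLike.mem_coe] at hhm
    have hh1 : hh ∈ Subgroup.centralizer (CH : Set G) := le_centralizer_centralizer' H hhm
    rw [← hIH, hIK] at hh1
    exact (Subgroup.mem_centralizer_iff.mp hh1 cc hcc).symm

end GWHelpers

theorem statement4 (hH1 : HypH1 G) (H K : Subgroup G)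
    (hHL : (Subgroup.normalizer (H : Set G)).FiniteIndex) (hKL : (Subgroup.normalizer (K : Set G)).FiniteIndex)
    (h1 : VA (H ⊓ K) H) (h2 : VA (H ⊓ K) K) :
    Subgroup.centralizer (H : Set G) = Subgroup.centralizer (K : Set G) := by
  exact statement4' hH1 H K hHL hKL h1 h2
end

section
/- Let G be a group satisfying (H1) and let H, K ∈ L(G). Suppose there exists D ∈ L(G) with H ∩ D = 1 and K ∩ D = 1, together with finite-index subgroups G₀, G₁ of G whose derived subgroups satisfy [G₀, G₀] ≤ ⟨H, D⟩ and [G₁, G₁] ≤ ⟨K, D⟩. Then H ∩ K ≤va H and H ∩ K ≤va K. -/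
variable {G : Type*} [Group G]

section s6aux

/-- From one-sided conjugation stability (for all elements of `X`), get `X ≤ (Subgroup.normalizer (Y : Set G))`. -/
private lemma s6_le_normalizer (X Y : Subgroup G)
    (h : ∀ g ∈ X, ∀ y ∈ Y, g * y * g⁻¹ ∈ Y) : X ≤ (Subgroup.normalizer (Y : Set G)) := by
  intro g hg
  rw [Subgroup.mem_normalizer_iff]
  intro y
  constructor
  · exact fun hy => h g hg y hy
  · intro hy
    have h2 := h g⁻¹ (X.inv_mem hg) _ hy
    have h3 : g⁻¹ * (g * y * g⁻¹) * g⁻¹⁻¹ = y := by group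
    rwa [h3] at h2

private lemma s6_conj_mem {X : Subgroup G} {q a : G}
    (h : q ∈ (Subgroup.normalizer (X : Set G))) (ha : a ∈ X) : q * a * q⁻¹ ∈ X :=
  (Subgroup.mem_normalizer_iff.mp h a).mp ha

/-- conjugation map equality from two-sided stability -/
private lemma s6_map_conj_eq {X : Subgroup G} {q : G} (h : q ∈ (Subgroup.normalizer (X : Set G))) :
    X.map (MulAut.conj q).toMonoidHom = X := by
  ext y
  simp only [Subgroup.mem_map, MulAut.conj_apply, MulEquiv.coe_toMonoidHom]
  constructor
  · rintro ⟨x, hx, rfl⟩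
    exact s6_conj_mem h hx
  · intro hy
    refine ⟨q⁻¹ * y * q, ?_, by group⟩
    have := s6_conj_mem ((Subgroup.normalizer _).inv_mem h) hy
    simpa using this

private lemma s6_mem_normalizer_of_map_eq {X : Subgroup G} {q : G}
    (h : X.map (MulAut.conj q).toMonoidHom = X) : q ∈ (Subgroup.normalizer (X : Set G)) := by
  rw [Subgroup.mem_normalizer_iff]
  intro x
  constructor
  · intro hx
    rw [← h]
    exact ⟨x, hx, by simp [MulAut.conj_apply]⟩
  · intro hx
    rw [← h] at hx
    obtain ⟨x', hx', hq⟩ := hx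
    simp only [MulAut.conj_apply, MulEquiv.coe_toMonoidHom] at hq
    have : x' = x := mul_left_cancel (mul_right_cancel hq)
    rwa [← this]

/-- H1 kill: an abelian subgroup whose normalizer contains a finite-index subgroup is trivial. -/
private lemma s6_eq_bot_of_abelian (hH1 : HypH1 G) {Q X : Subgroup G} (hQf : Q.FiniteIndex)
    (hN : Q ≤ (Subgroup.normalizer (X : Set G))) (hab : ∀ x ∈ X, ∀ y ∈ X, x * y = y * x) : X = ⊥ := by
  apply hH1
  · exact ⟨ne_zero_of_dvd_ne_zero hQf.index_ne_zero (Subgroup.index_dvd_of_le hN)⟩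
  · refine ⟨X, le_rfl, by rw [Subgroup.relIndex_self]; exact one_ne_zero, ?_⟩
    exact isSolvable_of_comm fun a b => Subtype.ext (hab a a.2 b b.2)

/-- H1 kill: a subgroup meeting a finite-index normal subgroup trivially (and normalized by it)
is finite, hence trivial. -/
private lemma s6_eq_bot_of_inf_bot (hH1 : HypH1 G) {Q X : Subgroup G} (hQf : Q.FiniteIndex)
    (hN : Q ≤ (Subgroup.normalizer (X : Set G))) (hdis : ∀ x ∈ X, x ∈ Q → x = 1) : X = ⊥ := by
  haveI : Finite (G ⧸ Q) := Q.finite_quotient_of_finiteIndex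
  have hinj : Function.Injective (fun x : X => (QuotientGroup.mk (x : G) : G ⧸ Q)) := by
    intro x y hxy
    have h1 : (x : G)⁻¹ * y ∈ Q := QuotientGroup.eq.mp hxy
    have h2 : (x : G)⁻¹ * y ∈ X := X.mul_mem (X.inv_mem x.2) y.2
    have h3 := hdis _ h2 h1
    have : (x : G) = y := by
      have := congrArg (fun z => (x : G) * z) h3
      simpa [mul_assoc] using this.symm
    exact Subtype.ext this
  haveI hfin : Finite X := Finite.of_injective _ hinj
  apply hH1
  · exact ⟨ne_zero_of_dvd_ne_zero hQf.index_ne_zero (Subgroup.index_dvd_of_le hN)⟩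
  · refine ⟨⊥, bot_le, ?_, ?_⟩
    · rw [Subgroup.relIndex_bot_left]
      exact Nat.card_ne_zero.mpr ⟨⟨⟨1, X.one_mem⟩⟩, hfin⟩
    · exact isSolvable_of_comm fun a b => by
        have ha : (a : G) = 1 := Subgroup.mem_bot.mp a.2
        have hb : (b : G) = 1 := Subgroup.mem_bot.mp b.2
        exact Subtype.ext (by simp [ha, hb])

/-- inner commutation step: elements of `A ⊓ Q` commute with elements of `D ⊓ Q`. -/
private lemma s6_base_comm {Q A D : Subgroup G} (_hQn : Q.Normal)
    (hQA : Q ≤ (Subgroup.normalizer (A : Set G))) (hQD : Q ≤ (Subgroup.normalizer (D : Set G))) (hAD : A ⊓ D = ⊥) :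
    ∀ a ∈ A ⊓ Q, ∀ z ∈ D ⊓ Q, a * z = z * a := by
  rintro a ⟨haA, haQ⟩ z ⟨hzD, hzQ⟩
  have hcA : a * z * a⁻¹ * z⁻¹ ∈ A := by
    have h1 : z * a⁻¹ * z⁻¹ ∈ A := s6_conj_mem (hQA hzQ) (A.inv_mem haA)
    have h2 : a * z * a⁻¹ * z⁻¹ = a * (z * a⁻¹ * z⁻¹) := by group
    rw [h2]; exact A.mul_mem haA h1
  have hcD : a * z * a⁻¹ * z⁻¹ ∈ D := by
    have h1 : a * z * a⁻¹ ∈ D := s6_conj_mem (hQD haQ) hzD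
    exact D.mul_mem h1 (D.inv_mem hzD)
  have hbot : a * z * a⁻¹ * z⁻¹ = 1 := by
    have : a * z * a⁻¹ * z⁻¹ ∈ A ⊓ D := ⟨hcA, hcD⟩
    rw [hAD] at this; exact Subgroup.mem_bot.mp this
  have h2 : a * z = (a * z * a⁻¹ * z⁻¹) * (z * a) := by group
  rw [hbot, one_mul] at h2; exact h2

/-- J-trick: elements of `A ⊓ Q` commute with all of `D`. -/
private lemma s6_centr (hH1 : HypH1 G) {Q A D : Subgroup G} (hQn : Q.Normal)
    (hQf : Q.FiniteIndex) (hQA : Q ≤ (Subgroup.normalizer (A : Set G))) (hQD : Q ≤ (Subgroup.normalizer (D : Set G)))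
    (hAD : A ⊓ D = ⊥) :
    ∀ a ∈ A ⊓ Q, ∀ d ∈ D, a * d = d * a := by
  have base := s6_base_comm hQn hQA hQD hAD
  set J : Subgroup G := ⁅A ⊓ Q, D⁆ with hJ
  -- J ≤ D ⊓ Q
  have hJle : J ≤ D ⊓ Q := by
    rw [hJ, Subgroup.commutator_le]
    rintro a ⟨haA, haQ⟩ d hd
    rw [commutatorElement_def]
    constructor
    · have h1 : a * d * a⁻¹ ∈ D := s6_conj_mem (hQD haQ) hd
      exact D.mul_mem h1 (D.inv_mem hd)
    · have h1 : d * a⁻¹ * d⁻¹ ∈ Q := hQn.conj_mem _ (Q.inv_mem haQ) d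
      have h2 : a * d * a⁻¹ * d⁻¹ = a * (d * a⁻¹ * d⁻¹) := by group
      rw [h2]; exact Q.mul_mem haQ h1
  -- J is contained in the centralizer of D ⊓ Q
  have hJcent : J ≤ Subgroup.centralizer ((D ⊓ Q : Subgroup G) : Set G) := by
    rw [hJ, Subgroup.commutator_le]
    rintro a ⟨haA, haQ⟩ d hd
    have hmem1 : a ∈ Subgroup.centralizer ((D ⊓ Q : Subgroup G) : Set G) := by
      rw [Subgroup.mem_centralizer_iff]
      intro z hz
      exact (base a ⟨haA, haQ⟩ z hz).symm
    have hmem2 : d * a⁻¹ * d⁻¹ ∈ Subgroup.centralizer ((D ⊓ Q : Subgroup G) : Set G) := by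
      rw [Subgroup.mem_centralizer_iff]
      intro z hz
      have hz' : d⁻¹ * z * d ∈ D ⊓ Q := by
        constructor
        · have : d⁻¹ * z * d⁻¹⁻¹ ∈ D := D.mul_mem (D.mul_mem (D.inv_mem hd) hz.1) (by
            simpa using hd)
          simpa using this
        · simpa using hQn.conj_mem _ hz.2 d⁻¹
      have hcomm1 : a⁻¹ * (d⁻¹ * z * d) = (d⁻¹ * z * d) * a⁻¹ := by
        have h : Commute a (d⁻¹ * z * d) := base a ⟨haA, haQ⟩ _ hz'
        exact h.inv_left.eq
      have key : z * (d * a⁻¹ * d⁻¹) = d * ((d⁻¹ * z * d) * a⁻¹) * d⁻¹ := by group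
      have key2 : (d * a⁻¹ * d⁻¹) * z = d * (a⁻¹ * (d⁻¹ * z * d)) * d⁻¹ := by group
      rw [key, ← hcomm1, ← key2]
    have : a * d * a⁻¹ * d⁻¹ = a * (d * a⁻¹ * d⁻¹) := by group
    rw [commutatorElement_def, this]
    exact Subgroup.mul_mem _ hmem1 hmem2
  -- Q normalizes J
  have hJnorm : Q ≤ (Subgroup.normalizer (J : Set G)) := by
    intro q hq
    apply s6_mem_normalizer_of_map_eq
    rw [hJ, Subgroup.map_commutator]
    have hAq : (A ⊓ Q).map (MulAut.conj q).toMonoidHom = A ⊓ Q := by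
      apply s6_map_conj_eq
      apply s6_le_normalizer Q (A ⊓ Q) _ hq
      rintro g hg y ⟨hyA, hyQ⟩
      exact ⟨s6_conj_mem (hQA hg) hyA, hQn.conj_mem _ hyQ g⟩
    have hD : D.map (MulAut.conj q).toMonoidHom = D := s6_map_conj_eq (hQD hq)
    rw [hAq, hD]
  -- kill J
  have hJbot : J = ⊥ := by
    apply s6_eq_bot_of_abelian hH1 hQf hJnorm
    intro x hx y hy
    exact ((Subgroup.mem_centralizer_iff.mp (hJcent hx)) y (hJle hy)).symm
  intro a ha d hd
  open scoped commutatorElement in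
  have : ⁅a, d⁆ ∈ J := Subgroup.commutator_mem_commutator ha hd
  rw [hJbot, Subgroup.mem_bot, commutatorElement_eq_one_iff_mul_comm] at this
  exact this

/-- decomposition of elements of a join when the left factor normalizes the right one. -/
private lemma s6_mem_sup {X Y : Subgroup G} (hn : X ≤ (Subgroup.normalizer (Y : Set G))) {v : G}
    (hv : v ∈ X ⊔ Y) : ∃ x ∈ X, ∃ y ∈ Y, v = x * y := by
  let P : Subgroup G :=
    { carrier := {v | ∃ x ∈ X, ∃ y ∈ Y, v = x * y}
      one_mem' := ⟨1, X.one_mem, 1, Y.one_mem, by group⟩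
      mul_mem' := by
        rintro v w ⟨x₁, hx₁, y₁, hy₁, rfl⟩ ⟨x₂, hx₂, y₂, hy₂, rfl⟩
        refine ⟨x₁ * x₂, X.mul_mem hx₁ hx₂, (x₂⁻¹ * y₁ * x₂) * y₂, Y.mul_mem ?_ hy₂, by group⟩
        have h := s6_conj_mem (hn (X.inv_mem hx₂)) hy₁
        simpa using h
      inv_mem' := by
        rintro v ⟨x, hx, y, hy, rfl⟩
        exact ⟨x⁻¹, X.inv_mem hx, x * y⁻¹ * x⁻¹, s6_conj_mem (hn hx) (Y.inv_mem hy), by group⟩ }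
  have hle : X ⊔ Y ≤ P := by
    apply sup_le
    · intro x hx; exact ⟨x, hx, 1, Y.one_mem, by group⟩
    · intro y hy; exact ⟨1, X.one_mem, y, hy, by group⟩
  exact hle hv

private lemma s6_master (hH1 : HypH1 G) (Q A B D : Subgroup G)
    (hQn : Q.Normal) (hQf : Q.FiniteIndex)
    (hQA : Q ≤ (Subgroup.normalizer (A : Set G))) (hQB : Q ≤ (Subgroup.normalizer (B : Set G))) (hQD : Q ≤ (Subgroup.normalizer (D : Set G)))
    (hAD : A ⊓ D = ⊥) (hBD : B ⊓ D = ⊥)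
    (hQQ : ⁅Q, Q⁆ ≤ B ⊔ D) :
    ⁅A ⊓ Q, A ⊓ Q⁆ ≤ B := by
  have cenA : ∀ a ∈ A ⊓ Q, ∀ d ∈ D, a * d = d * a := s6_centr hH1 hQn hQf hQA hQD hAD
  have cenB : ∀ b ∈ B ⊓ Q, ∀ d ∈ D, b * d = d * b := s6_centr hH1 hQn hQf hQB hQD hBD
  set Bq : Subgroup G := B ⊓ Q with hBqdef
  set M : Subgroup G := ⁅A ⊓ Q, A ⊓ Q⁆ with hMdef
  set E : Subgroup G := B ⊔ D with hEdef
  -- M is inside A ⊓ Q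
  have hM_le_Aq : M ≤ A ⊓ Q := by
    rw [hMdef, Subgroup.commutator_le]
    intro g₁ h₁ g₂ h₂
    rw [commutatorElement_def]
    exact Subgroup.mul_mem _ (Subgroup.mul_mem _ (Subgroup.mul_mem _ h₁ h₂)
      ((A ⊓ Q).inv_mem h₁)) ((A ⊓ Q).inv_mem h₂)
  have hM_le_E : M ≤ E := le_trans (Subgroup.commutator_mono inf_le_right inf_le_right) hQQ
  -- E normalizes Bq
  have hE_norm : E ≤ (Subgroup.normalizer (Bq : Set G)) := by
    rw [hEdef]
    apply sup_le
    · apply s6_le_normalizer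
      intro g hg y hy
      exact ⟨B.mul_mem (B.mul_mem hg hy.1) (B.inv_mem hg), hQn.conj_mem _ hy.2 g⟩
    · apply s6_le_normalizer
      intro g hg y hy
      have h1 : g * y * g⁻¹ = y := by
        rw [show g * y = y * g from (cenB y hy g hg).symm]; group
      rw [h1]; exact hy
  -- Q normalizes A ⊓ Q, Bq, M
  have hQAq : Q ≤ (Subgroup.normalizer ((A ⊓ Q : Subgroup G) : Set G)) := by
    apply s6_le_normalizer
    intro g hg y hy
    exact ⟨s6_conj_mem (hQA hg) hy.1, hQn.conj_mem _ hy.2 g⟩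
  have hQBq : Q ≤ (Subgroup.normalizer (Bq : Set G)) := by
    apply s6_le_normalizer
    intro g hg y hy
    exact ⟨s6_conj_mem (hQB hg) hy.1, hQn.conj_mem _ hy.2 g⟩
  have hQM : Q ≤ (Subgroup.normalizer (M : Set G)) := by
    intro q hq
    apply s6_mem_normalizer_of_map_eq
    rw [hMdef, Subgroup.map_commutator, s6_map_conj_eq (hQAq hq)]
  -- commutators of M with elements of E land in Bq
  have hME : ∀ m ∈ M, ∀ e ∈ E, m * e * m⁻¹ * e⁻¹ ∈ Bq := by
    intro m hm
    have hmQ : m ∈ Q := (hM_le_Aq hm).2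
    have hEc : E = Subgroup.closure ((B : Set G) ∪ (D : Set G)) := by
      rw [hEdef, Subgroup.closure_union, Subgroup.closure_eq, Subgroup.closure_eq]
    have key : ∀ e ∈ Subgroup.closure ((B : Set G) ∪ (D : Set G)),
        m * e * m⁻¹ * e⁻¹ ∈ Bq := by
      intro e he
      induction he using Subgroup.closure_induction with
      | mem x hx =>
        rcases hx with hx | hx
        · refine ⟨?_, ?_⟩
          · exact B.mul_mem (s6_conj_mem (hQB hmQ) hx) (B.inv_mem hx)
          · have h2 : m * x * m⁻¹ * x⁻¹ = m * (x * m⁻¹ * x⁻¹) := by group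
            rw [h2]
            exact Q.mul_mem hmQ (hQn.conj_mem _ (Q.inv_mem hmQ) x)
        · have h1 : m * x * m⁻¹ * x⁻¹ = 1 := by
            rw [cenA m (hM_le_Aq hm) x hx]; group
          exact h1 ▸ Bq.one_mem
      | one =>
        have h1 : m * 1 * m⁻¹ * 1⁻¹ = (1 : G) := by group
        rw [h1]; exact Bq.one_mem
      | mul x y hx hy ihx ihy =>
        have hxE : x ∈ E := by rw [hEc]; exact hx
        have hconj : x * (m * y * m⁻¹ * y⁻¹) * x⁻¹ ∈ Bq :=
          s6_conj_mem (hE_norm hxE) ihy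
        have heq : m * (x * y) * m⁻¹ * (x * y)⁻¹ =
            (m * x * m⁻¹ * x⁻¹) * (x * (m * y * m⁻¹ * y⁻¹) * x⁻¹) := by group
        rw [heq]
        exact Bq.mul_mem ihx hconj
      | inv x hx ih =>
        have hxE : x ∈ E := by rw [hEc]; exact hx
        have hconj : x⁻¹ * (m * x * m⁻¹ * x⁻¹)⁻¹ * x ∈ Bq := by
          have h := s6_conj_mem (hE_norm (E.inv_mem hxE)) (Bq.inv_mem ih)
          simpa using h
        have heq : m * x⁻¹ * m⁻¹ * x⁻¹⁻¹ = x⁻¹ * (m * x * m⁻¹ * x⁻¹)⁻¹ * x := by group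
        rw [heq]
        exact hconj
    intro e he
    exact key e (by rw [← hEc]; exact he)
  -- the conjugation action of E on Bq is realized by elements of B
  have hE0 : ∀ e ∈ E, ∃ k ∈ B, ∀ x ∈ Bq, e * x * e⁻¹ = k * x * k⁻¹ := by
    have hEc : E = Subgroup.closure ((B : Set G) ∪ (D : Set G)) := by
      rw [hEdef, Subgroup.closure_union, Subgroup.closure_eq, Subgroup.closure_eq]
    have key : ∀ e ∈ Subgroup.closure ((B : Set G) ∪ (D : Set G)),
        ∃ k ∈ B, ∀ x ∈ Bq, e * x * e⁻¹ = k * x * k⁻¹ := by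
      intro e he
      induction he using Subgroup.closure_induction with
      | mem x hx =>
        rcases hx with hx | hx
        · exact ⟨x, hx, fun t _ => rfl⟩
        · refine ⟨1, B.one_mem, fun t ht => ?_⟩
          have h1 : x * t * x⁻¹ = t := by
            rw [show x * t = t * x from (cenB t ht x hx).symm]; group
          rw [h1]; group
      | one =>
        exact ⟨1, B.one_mem, fun t _ => by group⟩
      | mul x y hx hy ihx ihy =>
        obtain ⟨k₁, hk₁, ih₁⟩ := ihx
        obtain ⟨k₂, hk₂, ih₂⟩ := ihy
        refine ⟨k₁ * k₂, B.mul_mem hk₁ hk₂, fun t ht => ?_⟩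
        have htk : k₂ * t * k₂⁻¹ ∈ Bq :=
          ⟨B.mul_mem (B.mul_mem hk₂ ht.1) (B.inv_mem hk₂), hQn.conj_mem _ ht.2 k₂⟩
        calc x * y * t * (x * y)⁻¹ = x * (y * t * y⁻¹) * x⁻¹ := by group
          _ = x * (k₂ * t * k₂⁻¹) * x⁻¹ := by rw [ih₂ t ht]
          _ = k₁ * (k₂ * t * k₂⁻¹) * k₁⁻¹ := ih₁ _ htk
          _ = (k₁ * k₂) * t * (k₁ * k₂)⁻¹ := by group
      | inv x hx ih =>
        obtain ⟨k, hk, ihk⟩ := ih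
        refine ⟨k⁻¹, B.inv_mem hk, fun t ht => ?_⟩
        have ht' : k⁻¹ * t * k ∈ Bq := by
          refine ⟨B.mul_mem (B.mul_mem (B.inv_mem hk) ht.1) hk, ?_⟩
          have := hQn.conj_mem _ ht.2 k⁻¹
          simpa using this
        have h1 : x * (k⁻¹ * t * k) * x⁻¹ = k * (k⁻¹ * t * k) * k⁻¹ := ihk _ ht'
        have h2 : k * (k⁻¹ * t * k) * k⁻¹ = t := by group
        have h3 : x * (k⁻¹ * t * k) * x⁻¹ = t := h1.trans h2
        have h4 : k⁻¹ * t * k = x⁻¹ * t * x := by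
          conv_rhs => rw [← h3]
          group
        simpa only [inv_inv] using h4.symm
    intro e he
    exact key e (by rw [← hEc]; exact he)
  -- Q-stability of the centralizer of Bq
  have hQC : Q ≤ (Subgroup.normalizer ((Subgroup.centralizer ((Bq : Subgroup G) : Set G) : Subgroup G) : Set G)) := by
    apply s6_le_normalizer
    intro q hq x hx
    rw [Subgroup.mem_centralizer_iff]
    intro k hk
    have hk' : q⁻¹ * k * q ∈ Bq := by
      have h := s6_conj_mem ((Subgroup.normalizer (Bq : Set G)).inv_mem (hQBq hq)) hk
      simpa using h
    have hx' := Subgroup.mem_centralizer_iff.mp hx _ hk'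
    have e1 : k * (q * x * q⁻¹) = q * ((q⁻¹ * k * q) * x) * q⁻¹ := by group
    have e2 : (q * x * q⁻¹) * k = q * (x * (q⁻¹ * k * q)) * q⁻¹ := by group
    rw [e1, hx']
    exact e2.symm
  -- kill the center of Bq
  have hZ : Bq ⊓ Subgroup.centralizer ((Bq : Subgroup G) : Set G) = ⊥ := by
    apply s6_eq_bot_of_abelian hH1 hQf
    · apply s6_le_normalizer
      intro g hg y hy
      exact ⟨s6_conj_mem (hQBq hg) hy.1, s6_conj_mem (hQC hg) hy.2⟩
    · intro x hx y hy
      exact (Subgroup.mem_centralizer_iff.mp hx.2 y hy.1).symm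
  -- M normalizes Bq and B
  have hM_norm_Bq : M ≤ (Subgroup.normalizer (Bq : Set G)) := le_trans hM_le_Aq (le_trans inf_le_right hQBq)
  have hM_norm_B : M ≤ (Subgroup.normalizer (B : Set G)) := le_trans hM_le_Aq (le_trans inf_le_right hQB)
  have hMBq_le_E : M ⊔ Bq ≤ E := sup_le hM_le_E (le_trans inf_le_left le_sup_left)
  -- commutators of M ⊔ Bq with E land in Bq
  have hcomm2 : ∀ w ∈ M ⊔ Bq, ∀ y ∈ E, w * y * w⁻¹ * y⁻¹ ∈ Bq := by
    intro w hw y hy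
    obtain ⟨m, hm, x, hx, rfl⟩ := s6_mem_sup hM_norm_Bq hw
    have hxB : x ∈ E := (le_trans inf_le_left le_sup_left : Bq ≤ E) hx
    have hy'' : x * y * x⁻¹ ∈ E := E.mul_mem (E.mul_mem hxB hy) (E.inv_mem hxB)
    have h1 : m * (x * y * x⁻¹) * m⁻¹ * (x * y * x⁻¹)⁻¹ ∈ Bq := hME m hm _ hy''
    have h2 : x * y * x⁻¹ * y⁻¹ ∈ Bq := by
      have h3 : y * x⁻¹ * y⁻¹ ∈ Bq := s6_conj_mem (hE_norm hy) (Bq.inv_mem hx)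
      have h4 : x * y * x⁻¹ * y⁻¹ = x * (y * x⁻¹ * y⁻¹) := by group
      rw [h4]; exact Bq.mul_mem hx h3
    have h5 : (m * x) * y * (m * x)⁻¹ * y⁻¹ =
        (m * (x * y * x⁻¹) * m⁻¹ * (x * y * x⁻¹)⁻¹) * (x * y * x⁻¹ * y⁻¹) := by group
    rw [h5]
    exact Bq.mul_mem h1 h2
  -- kill W
  have hW : (M ⊔ Bq) ⊓ Subgroup.centralizer ((Bq : Subgroup G) : Set G) = ⊥ := by
    apply s6_eq_bot_of_abelian hH1 hQf
    · apply s6_le_normalizer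
      intro g hg y hy
      refine ⟨?_, s6_conj_mem (hQC hg) hy.2⟩
      obtain ⟨mm, hmm, xx, hxx, rfl⟩ := s6_mem_sup hM_norm_Bq hy.1
      have e1 : g * (mm * xx) * g⁻¹ = (g * mm * g⁻¹) * (g * xx * g⁻¹) := by group
      rw [e1]
      exact Subgroup.mul_mem _ (Subgroup.mem_sup_left (s6_conj_mem (hQM hg) hmm))
        (Subgroup.mem_sup_right (s6_conj_mem (hQBq hg) hxx))
    · intro w hw w' hw'
      have h1 : w * w' * w⁻¹ * w'⁻¹ ∈ Bq := hcomm2 w hw.1 w' (hMBq_le_E hw'.1)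
      have h2 : w * w' * w⁻¹ * w'⁻¹ ∈
          Subgroup.centralizer ((Bq : Subgroup G) : Set G) :=
        Subgroup.mul_mem _ (Subgroup.mul_mem _ (Subgroup.mul_mem _ hw.2 hw'.2)
          (Subgroup.inv_mem _ hw.2)) (Subgroup.inv_mem _ hw'.2)
      have h3 : w * w' * w⁻¹ * w'⁻¹ = 1 := by
        have : w * w' * w⁻¹ * w'⁻¹ ∈ Bq ⊓ Subgroup.centralizer ((Bq : Subgroup G) : Set G) :=
          ⟨h1, h2⟩
        rw [hZ] at this
        exact Subgroup.mem_bot.mp this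
      have h4 : w * w' = (w * w' * w⁻¹ * w'⁻¹) * (w' * w) := by group
      rw [h3, one_mul] at h4
      exact h4
  -- kill V
  have hV : (M ⊔ B) ⊓ Subgroup.centralizer ((Bq : Subgroup G) : Set G) = ⊥ := by
    apply s6_eq_bot_of_inf_bot hH1 hQf
    · apply s6_le_normalizer
      intro g hg y hy
      refine ⟨?_, s6_conj_mem (hQC hg) hy.2⟩
      obtain ⟨mm, hmm, xx, hxx, rfl⟩ := s6_mem_sup hM_norm_B hy.1
      have e1 : g * (mm * xx) * g⁻¹ = (g * mm * g⁻¹) * (g * xx * g⁻¹) := by group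
      rw [e1]
      exact Subgroup.mul_mem _ (Subgroup.mem_sup_left (s6_conj_mem (hQM hg) hmm))
        (Subgroup.mem_sup_right (s6_conj_mem (hQB hg) hxx))
    · intro v hv hvQ
      obtain ⟨m, hm, b, hb, rfl⟩ := s6_mem_sup hM_norm_B hv.1
      have hbQ : b ∈ Q := by
        have hmQ : m ∈ Q := (hM_le_Aq hm).2
        have : m⁻¹ * (m * b) ∈ Q := Q.mul_mem (Q.inv_mem hmQ) hvQ
        simpa using this
      have hmem : m * b ∈ (M ⊔ Bq) ⊓ Subgroup.centralizer ((Bq : Subgroup G) : Set G) :=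
        ⟨Subgroup.mul_mem _ (Subgroup.mem_sup_left hm) (Subgroup.mem_sup_right ⟨hb, hbQ⟩),
          hv.2⟩
      rw [hW] at hmem
      exact Subgroup.mem_bot.mp hmem
  -- conclusion: M ≤ B
  intro m hm
  obtain ⟨k, hk, hconj⟩ := hE0 m (hM_le_E hm)
  have hcent : k⁻¹ * m ∈ Subgroup.centralizer ((Bq : Subgroup G) : Set G) := by
    rw [Subgroup.mem_centralizer_iff]
    intro x hx
    have h1 := hconj x hx
    have e1 : x * (k⁻¹ * m) = k⁻¹ * ((k * x * k⁻¹) * m) := by group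
    have e2 : k⁻¹ * ((m * x * m⁻¹) * m) = (k⁻¹ * m) * x := by group
    rw [e1, ← h1]
    exact e2
  have hsup : k⁻¹ * m ∈ M ⊔ B :=
    Subgroup.mul_mem _ (Subgroup.mem_sup_right (B.inv_mem hk)) (Subgroup.mem_sup_left hm)
  have hone : k⁻¹ * m = 1 := by
    have : k⁻¹ * m ∈ (M ⊔ B) ⊓ Subgroup.centralizer ((Bq : Subgroup G) : Set G) :=
      ⟨hsup, hcent⟩
    rw [hV] at this
    exact Subgroup.mem_bot.mp this
  have hmk : m = k := (inv_mul_eq_one.mp hone).symm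
  rw [hmk]
  exact hk

private lemma s6_commutator_le_self (X : Subgroup G) : ⁅X, X⁆ ≤ X :=
  Subgroup.commutator_le.mpr fun a ha b hb => by
    rw [commutatorElement_def]
    exact X.mul_mem (X.mul_mem (X.mul_mem ha hb) (X.inv_mem ha)) (X.inv_mem hb)

end s6aux

theorem statement6 (hH1 : HypH1 G) (H K D : Subgroup G)
    (hHL : (Subgroup.normalizer (H : Set G)).FiniteIndex) (hKL : (Subgroup.normalizer (K : Set G)).FiniteIndex)
    (hDL : (Subgroup.normalizer (D : Set G)).FiniteIndex)
    (hHD : H ⊓ D = ⊥) (hKD : K ⊓ D = ⊥)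
    (G₀ G₁ : Subgroup G) (h₀ : G₀.FiniteIndex) (h₁ : G₁.FiniteIndex)
    (hc₀ : ⁅G₀, G₀⁆ ≤ H ⊔ D) (hc₁ : ⁅G₁, G₁⁆ ≤ K ⊔ D) :
    VA (H ⊓ K) H ∧ VA (H ⊓ K) K := by
  haveI := hHL; haveI := hKL; haveI := hDL; haveI := h₀; haveI := h₁
  set T : Subgroup G := (Subgroup.normalizer (H : Set G)) ⊓ (Subgroup.normalizer (K : Set G)) ⊓ (Subgroup.normalizer (D : Set G)) ⊓ G₀ ⊓ G₁ with hT
  haveI hTf : T.FiniteIndex := by rw [hT]; infer_instance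
  set Q : Subgroup G := T.normalCore with hQ
  have hQn : Q.Normal := T.normalCore_normal
  haveI hQf : Q.FiniteIndex := by rw [hQ]; infer_instance
  have hQT : Q ≤ T := T.normalCore_le
  have hQH : Q ≤ (Subgroup.normalizer (H : Set G)) := fun x hx => (hQT hx).1.1.1.1
  have hQK : Q ≤ (Subgroup.normalizer (K : Set G)) := fun x hx => (hQT hx).1.1.1.2
  have hQD : Q ≤ (Subgroup.normalizer (D : Set G)) := fun x hx => (hQT hx).1.1.2
  have hQG₀ : Q ≤ G₀ := fun x hx => (hQT hx).1.2
  have hQG₁ : Q ≤ G₁ := fun x hx => (hQT hx).2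
  have hcom₁ : ⁅Q, Q⁆ ≤ K ⊔ D := le_trans (Subgroup.commutator_mono hQG₁ hQG₁) hc₁
  have hcom₀ : ⁅Q, Q⁆ ≤ H ⊔ D := le_trans (Subgroup.commutator_mono hQG₀ hQG₀) hc₀
  have hMK : ⁅H ⊓ Q, H ⊓ Q⁆ ≤ K :=
    s6_master hH1 Q H K D hQn hQf hQH hQK hQD hHD hKD hcom₁
  have hNH : ⁅K ⊓ Q, K ⊓ Q⁆ ≤ H :=
    s6_master hH1 Q K H D hQn hQf hQK hQH hQD hKD hHD hcom₀
  have hrelH : (H ⊓ Q).relIndex H ≠ 0 := by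
    rw [inf_comm, Subgroup.inf_relIndex_right]
    exact Subgroup.FiniteIndex.index_ne_zero
  have hrelK : (K ⊓ Q).relIndex K ≠ 0 := by
    rw [inf_comm, Subgroup.inf_relIndex_right]
    exact Subgroup.FiniteIndex.index_ne_zero
  constructor
  · exact ⟨inf_le_left, H ⊓ Q, inf_le_left, hrelH,
      le_inf (le_trans (s6_commutator_le_self _) inf_le_left) hMK⟩
  · exact ⟨inf_le_right, K ⊓ Q, inf_le_left, hrelK,
      le_inf hNH (le_trans (s6_commutator_le_self _) inf_le_left)⟩
end

section
/- Let G be a group satisfying (H1) and let B₁, B₂ be nontrivial basal subgroups of G such that C_G(B₁ ∩ B₂) = C_G(B₁) (i.e. the class [B₁] lies below [B₂] in the structure lattice). Then N_G(B₁) ≤ N_G(B₂). -/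
variable {G : Type*} [Group G]

section AuxLemmas

lemma mem_conjBy {B : Subgroup G} {g x : G} : x ∈ conjBy B g ↔ g * x * g⁻¹ ∈ B := by
  simp only [conjBy, Subgroup.mem_map, MulEquiv.coe_toMonoidHom, MulAut.conj_apply, inv_inv]
  constructor
  · rintro ⟨b, hb, rfl⟩
    simpa [mul_assoc] using hb
  · intro h
    exact ⟨g * x * g⁻¹, h, by group⟩

lemma conjBy_inf (A B : Subgroup G) (g : G) :
    conjBy (A ⊓ B) g = conjBy A g ⊓ conjBy B g := by
  ext x
  simp [mem_conjBy, Subgroup.mem_inf]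

lemma mem_normalizer_iff_conjBy {B : Subgroup G} {g : G} :
    g ∈ (Subgroup.normalizer (B : Set G)) ↔ conjBy B g = B := by
  rw [Subgroup.mem_normalizer_iff]
  constructor
  · intro h
    ext x
    rw [mem_conjBy]
    exact (h x).symm
  · intro h x
    constructor
    · intro hx
      apply mem_conjBy.mp
      rw [h]
      exact hx
    · intro hx
      have : x ∈ conjBy B g := mem_conjBy.mpr hx
      rwa [h] at this

lemma conjBy_eq_self_of_normal {K : Subgroup G} (hKn : K.Normal) (g : G) :
    conjBy K g = K := by
  ext w
  rw [mem_conjBy]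
  constructor
  · intro hw
    have := hKn.conj_mem _ hw g⁻¹
    simpa [mul_assoc] using this
  · intro hw
    exact hKn.conj_mem _ hw g

lemma centralizer_conjBy (B : Subgroup G) (g : G) :
    Subgroup.centralizer ↑(conjBy B g) = conjBy (Subgroup.centralizer (B : Set G)) g := by
  ext x
  rw [mem_conjBy, Subgroup.mem_centralizer_iff, Subgroup.mem_centralizer_iff]
  constructor
  · intro h b hb
    have hb' : g⁻¹ * b * g ∈ conjBy B g := mem_conjBy.mpr (by simpa [mul_assoc] using hb)
    have h1 := h _ hb'
    have := congrArg (fun t => g * t * g⁻¹) h1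
    simpa [mul_assoc] using this
  · intro h b hb
    have hb' : g * b * g⁻¹ ∈ B := mem_conjBy.mp hb
    have h1 := h _ hb'
    have := congrArg (fun t => g⁻¹ * t * g) h1
    simpa [mul_assoc] using this

lemma normalizer_conjBy (B : Subgroup G) (g : G) :
    (Subgroup.normalizer (((conjBy B g) : Subgroup G) : Set G)) = conjBy (Subgroup.normalizer (B : Set G)) g := by
  ext x
  rw [mem_conjBy, Subgroup.mem_normalizer_iff, Subgroup.mem_normalizer_iff]
  constructor
  · intro h b
    have := h (g⁻¹ * b * g)
    rw [mem_conjBy, mem_conjBy] at this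
    simpa [mul_assoc] using this
  · intro h b
    rw [mem_conjBy, mem_conjBy]
    have := h (g * b * g⁻¹)
    simpa [mul_assoc] using this

lemma index_conjBy (B : Subgroup G) (g : G) : (conjBy B g).index = B.index := by
  apply Subgroup.index_map_eq
  · exact (MulAut.conj g⁻¹).surjective
  · intro x hx
    have : x = 1 := (MulAut.conj g⁻¹).injective (by simpa using hx)
    rw [this]
    exact one_mem B

lemma finiteIndex_conjBy_normalizer {B : Subgroup G} (h : (Subgroup.normalizer (B : Set G)).FiniteIndex) (g : G) :
    (Subgroup.normalizer (((conjBy B g) : Subgroup G) : Set G)).FiniteIndex := by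
  rw [normalizer_conjBy]
  exact ⟨by rw [index_conjBy]; exact h.index_ne_zero⟩

lemma eq_of_commutator {x y : G} (h : x⁻¹ * y⁻¹ * x * y = 1) : x * y = y * x := by
  have := congrArg (fun t => y * x * t) h
  simpa [mul_assoc] using this

lemma comm_aux {x y z : G} (h1 : y * z = z * y) (h2 : y * (x * z * x⁻¹) = (x * z * x⁻¹) * y) :
    z * (x⁻¹ * y⁻¹ * x * y) = (x⁻¹ * y⁻¹ * x * y) * z := by
  have c2 : Commute y (x * z * x⁻¹) := h2
  have h2' : (x * z * x⁻¹) * y⁻¹ = y⁻¹ * (x * z * x⁻¹) := (c2.inv_left).eq.symm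
  calc z * (x⁻¹ * y⁻¹ * x * y)
      = x⁻¹ * ((x * z * x⁻¹) * y⁻¹) * (x * y) := by group
    _ = x⁻¹ * (y⁻¹ * (x * z * x⁻¹)) * (x * y) := by rw [h2']
    _ = (x⁻¹ * y⁻¹ * x) * (z * y) := by group
    _ = (x⁻¹ * y⁻¹ * x) * (y * z) := by rw [← h1]
    _ = (x⁻¹ * y⁻¹ * x * y) * z := by group

lemma key_lemma (hH1 : HypH1 G) (B C K : Subgroup G) (hKn : K.Normal)
    (hKfi : K.FiniteIndex) (hKC : K ≤ (Subgroup.normalizer (C : Set G)))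
    (hBfi : (Subgroup.normalizer (B : Set G)).FiniteIndex) (hBC : B ⊓ C = ⊥) :
    ∀ y ∈ C ⊓ (Subgroup.normalizer (B : Set G)), ∀ x ∈ B, x * y = y * x := by
  haveI := hKn
  have P1 : ∀ z ∈ B ⊓ K, ∀ y ∈ C ⊓ (Subgroup.normalizer (B : Set G)), z * y = y * z := by
    intro z hz y hy
    obtain ⟨hzB, hzK⟩ := Subgroup.mem_inf.mp hz
    obtain ⟨hyC, hyN⟩ := Subgroup.mem_inf.mp hy
    apply eq_of_commutator
    have m1 : y⁻¹ * z * y ∈ B := by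
      have := (Subgroup.mem_normalizer_iff.mp (inv_mem hyN) z).mp hzB
      simpa using this
    have hzN : z ∈ (Subgroup.normalizer (C : Set G)) := hKC hzK
    have m2 : z⁻¹ * y⁻¹ * z ∈ C := by
      have := (Subgroup.mem_normalizer_iff.mp (inv_mem hzN) y⁻¹).mp (inv_mem hyC)
      simpa [mul_assoc] using this
    have hmem : z⁻¹ * y⁻¹ * z * y ∈ B ⊓ C := by
      refine Subgroup.mem_inf.mpr ⟨?_, mul_mem m2 hyC⟩
      have := mul_mem (inv_mem hzB) m1
      simpa [mul_assoc] using this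
    rw [hBC, Subgroup.mem_bot] at hmem
    exact hmem
  have hNR : (Subgroup.normalizer (B : Set G)) ≤ (Subgroup.normalizer (((B ⊓ Subgroup.centralizer ↑(B ⊓ K)) : Subgroup G) : Set G)) := by
    intro h hh
    rw [mem_normalizer_iff_conjBy] at hh ⊢
    rw [conjBy_inf, hh, ← centralizer_conjBy, conjBy_inf, hh, conjBy_eq_self_of_normal hKn]
  have hRfi : (Subgroup.normalizer (((B ⊓ Subgroup.centralizer ↑(B ⊓ K)) : Subgroup G) : Set G)).FiniteIndex := by
    constructor
    intro h0
    have hdvd := Subgroup.index_dvd_of_le hNR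
    rw [h0] at hdvd
    exact hBfi.index_ne_zero (zero_dvd_iff.mp hdvd)
  have hRsolv : VirtSolvable (B ⊓ Subgroup.centralizer ↑(B ⊓ K)) := by
    refine ⟨K ⊓ (B ⊓ Subgroup.centralizer ↑(B ⊓ K)), inf_le_right, ?_, ?_⟩
    · rw [Subgroup.inf_relIndex_right]
      intro h0
      have hdvd := Subgroup.relIndex_dvd_index_of_normal K (B ⊓ Subgroup.centralizer ↑(B ⊓ K))
      rw [h0] at hdvd
      exact hKfi.index_ne_zero (zero_dvd_iff.mp hdvd)
    · apply isSolvable_of_comm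
      rintro ⟨a, ha⟩ ⟨b, hb⟩
      obtain ⟨haK, haR⟩ := Subgroup.mem_inf.mp ha
      obtain ⟨hbK, hbR⟩ := Subgroup.mem_inf.mp hb
      have haC : a ∈ Subgroup.centralizer ↑(B ⊓ K) := (Subgroup.mem_inf.mp haR).2
      have hbBK : b ∈ B ⊓ K := Subgroup.mem_inf.mpr ⟨(Subgroup.mem_inf.mp hbR).1, hbK⟩
      have hab : b * a = a * b := Subgroup.mem_centralizer_iff.mp haC b hbBK
      exact Subtype.ext hab.symm
  have hRbot : B ⊓ Subgroup.centralizer ↑(B ⊓ K) = ⊥ := hH1 _ hRfi hRsolv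
  intro y hy x hx
  obtain ⟨hyC, hyN⟩ := Subgroup.mem_inf.mp hy
  apply eq_of_commutator
  have hcR : x⁻¹ * y⁻¹ * x * y ∈ B ⊓ Subgroup.centralizer ↑(B ⊓ K) := by
    refine Subgroup.mem_inf.mpr ⟨?_, ?_⟩
    · have m1 : y⁻¹ * x * y ∈ B := by
        have := (Subgroup.mem_normalizer_iff.mp (inv_mem hyN) x).mp hx
        simpa using this
      have := mul_mem (inv_mem hx) m1
      simpa [mul_assoc] using this
    · rw [Subgroup.mem_centralizer_iff]
      intro z hz
      have hzBK : z ∈ B ⊓ K := hz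
      obtain ⟨hzB, hzK⟩ := Subgroup.mem_inf.mp hzBK
      have hz' : x * z * x⁻¹ ∈ B ⊓ K :=
        Subgroup.mem_inf.mpr ⟨mul_mem (mul_mem hx hzB) (inv_mem hx), hKn.conj_mem z hzK x⟩
      have h1 : y * z = z * y := (P1 z hzBK y hy).symm
      have h2 : y * (x * z * x⁻¹) = (x * z * x⁻¹) * y := (P1 _ hz' y hy).symm
      exact comm_aux h1 h2
  rw [hRbot, Subgroup.mem_bot] at hcR
  exact hcR

lemma basal_commute (hH1 : HypH1 G) (B : Subgroup G) (hB : IsBasal B) (g : G)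
    (hdisj : conjBy B g ⊓ B = ⊥) :
    ∀ x ∈ B, ∀ y ∈ conjBy B g, x * y = y * x := by
  haveI := hB.1
  have hKn : ((Subgroup.normalizer (B : Set G)).normalCore).Normal := Subgroup.normalCore_normal _
  have hKfi : ((Subgroup.normalizer (B : Set G)).normalCore).FiniteIndex := inferInstance
  have hKB : (Subgroup.normalizer (B : Set G)).normalCore ≤ (Subgroup.normalizer (B : Set G)) := Subgroup.normalCore_le _
  have hKC : (Subgroup.normalizer (B : Set G)).normalCore ≤ (Subgroup.normalizer (((conjBy B g) : Subgroup G) : Set G)) := by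
    rw [normalizer_conjBy]
    intro k hk
    rw [mem_conjBy]
    exact hKB (hKn.conj_mem k hk g)
  have hCfi : (Subgroup.normalizer (((conjBy B g) : Subgroup G) : Set G)).FiniteIndex := finiteIndex_conjBy_normalizer hB.1 g
  have hBC : B ⊓ conjBy B g = ⊥ := by rw [inf_comm]; exact hdisj
  have Q1 := key_lemma hH1 B (conjBy B g) _ hKn hKfi hKC hB.1 hBC
  have Q2 := key_lemma hH1 (conjBy B g) B _ hKn hKfi hKB hCfi hdisj
  intro x hx y hy
  rcases hB.2 y with h | h
  · exact Q1 y (Subgroup.mem_inf.mpr ⟨hy, mem_normalizer_iff_conjBy.mpr h⟩) x hx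
  · have hBK : B ⊓ (Subgroup.normalizer (B : Set G)).normalCore = ⊥ := by
      rw [eq_bot_iff]
      intro z hz
      obtain ⟨hzB, hzK⟩ := Subgroup.mem_inf.mp hz
      have hcomm : y * z = z * y := Q2 z (Subgroup.mem_inf.mpr ⟨hzB, hKC hzK⟩) y hy
      have hyzy : y * z * y⁻¹ = z := by rw [hcomm]; exact mul_inv_cancel_right z y
      have hzc : z ∈ conjBy B y := mem_conjBy.mpr (by rw [hyzy]; exact hzB)
      have hmem : z ∈ conjBy B y ⊓ B := Subgroup.mem_inf.mpr ⟨hzc, hzB⟩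
      rw [h] at hmem
      exact hmem
    have hBbot : B = ⊥ := by
      apply hH1 B hB.1
      refine ⟨⊥, bot_le, ?_, ?_⟩
      · rw [← hBK, inf_comm, Subgroup.inf_relIndex_right]
        intro h0
        have hdvd := Subgroup.relIndex_dvd_index_of_normal ((Subgroup.normalizer (B : Set G)).normalCore) B
        rw [h0] at hdvd
        exact hKfi.index_ne_zero (zero_dvd_iff.mp hdvd)
      · exact isSolvable_of_comm fun a b => Subsingleton.elim _ _
    rw [hBbot, Subgroup.mem_bot] at hx
    simp [hx]

end AuxLemmas

theorem statement10 (hH1 : HypH1 G) (B₁ B₂ : Subgroup G)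
    (h₁ : IsBasal B₁) (h₂ : IsBasal B₂) (hn₁ : B₁ ≠ ⊥) (hn₂ : B₂ ≠ ⊥)
    (hle : Subgroup.centralizer ((B₁ ⊓ B₂ : Subgroup G) : Set G) =
      Subgroup.centralizer (B₁ : Set G)) :
    Subgroup.normalizer (B₁ : Set G) ≤ Subgroup.normalizer (B₂ : Set G) := by
  intro g hg
  rcases h₂.2 g with h | h
  · rw [Subgroup.mem_normalizer_iff]
    intro x
    constructor
    · intro hx
      apply mem_conjBy.mp
      rw [h]
      exact hx
    · intro hx
      have : x ∈ conjBy B₂ g := mem_conjBy.mpr hx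
      rwa [h] at this
  · exfalso
    have hcomm := basal_commute hH1 B₂ h₂ g h
    have hgB₁ : conjBy B₁ g = B₁ := mem_normalizer_iff_conjBy.mp hg
    have hle' : Subgroup.centralizer ↑(B₁ ⊓ conjBy B₂ g) =
        Subgroup.centralizer (B₁ : Set G) := by
      have h2 := congrArg (fun S : Subgroup G => conjBy S g) hle
      rw [← centralizer_conjBy, ← centralizer_conjBy, conjBy_inf, hgB₁] at h2
      exact h2
    have habel : ∀ a ∈ B₁, ∀ b ∈ B₁, a * b = b * a := by
      have hEc : ∀ e ∈ B₁ ⊓ conjBy B₂ g, e ∈ Subgroup.centralizer (B₁ : Set G) := by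
        intro e he
        rw [← hle, Subgroup.mem_centralizer_iff]
        intro d hd
        have hdBK : d ∈ B₁ ⊓ B₂ := hd
        exact hcomm d (Subgroup.mem_inf.mp hdBK).2 e (Subgroup.mem_inf.mp he).2
      intro a ha b hb
      have hbC : b ∈ Subgroup.centralizer ↑(B₁ ⊓ conjBy B₂ g) := by
        rw [Subgroup.mem_centralizer_iff]
        intro e he
        exact (Subgroup.mem_centralizer_iff.mp (hEc e he) b hb).symm
      rw [hle'] at hbC
      exact Subgroup.mem_centralizer_iff.mp hbC a ha
    apply hn₁
    apply hH1 B₁ h₁.1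
    exact ⟨B₁, le_refl _, by rw [Subgroup.relIndex_self]; exact one_ne_zero,
      isSolvable_of_comm fun a b => Subtype.ext (habel _ a.2 _ b.2)⟩
end

section
/- Let G be a group satisfying (H1) and let A₁, A₂ be basal subgroups of G such that A₁ ∩ A₂ ≤va A₁ (i.e. there is a finite-index subgroup K of A₁ with [K, K] ≤ A₁ ∩ A₂; this says [A₁] ≤ [A₂] in the structure lattice). Then R(A₁) ≤ R(A₂). -/
variable {G : Type*} [Group G]

open scoped commutatorElement

theorem statement13 (hH1 : HypH1 G) (A₁ A₂ : Subgroup G)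
    (h₁ : IsBasal A₁) (h₂ : IsBasal A₂)
    (K : Subgroup G) (hK : K ≤ A₁) (hKfin : K.relIndex A₁ ≠ 0)
    (hKc : ⁅K, K⁆ ≤ A₁ ⊓ A₂) :
    rigidNormalizer A₁ ≤ rigidNormalizer A₂ := by
  refine le_iInf fun B => le_iInf fun hB => ?_
  obtain ⟨hBbasal, hA₂B⟩ := hB
  -- It suffices to show `A₁ ⊓ B = ⊥`.
  suffices h : A₁ ⊓ B = ⊥ by
    exact iInf_le_of_le B (iInf_le_of_le ⟨hBbasal, h⟩ le_rfl)
  -- Apply (H1) to `A₁ ⊓ B`.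
  apply hH1 (A₁ ⊓ B)
  · -- the normalizer of `A₁ ⊓ B` has finite index
    have hf1 : (Subgroup.normalizer (A₁ : Set G)).FiniteIndex := h₁.1
    have hf2 : (Subgroup.normalizer (B : Set G)).FiniteIndex := hBbasal.1
    have hle : Subgroup.normalizer (A₁ : Set G) ⊓ Subgroup.normalizer (B : Set G) ≤
        Subgroup.normalizer ((A₁ ⊓ B : Subgroup G) : Set G) := by
      intro x hx
      rw [Subgroup.mem_normalizer_iff]
      intro h
      have hx1 := Subgroup.mem_normalizer_iff.mp hx.1 h
      have hx2 := Subgroup.mem_normalizer_iff.mp hx.2 h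
      simp only [Subgroup.mem_inf, Subgroup.coe_inf, Set.mem_inter_iff, SetLike.mem_coe] at *
      exact ⟨by tauto, by tauto⟩
    exact Subgroup.finiteIndex_of_le hle
  · -- `A₁ ⊓ B` is virtually solvable, witnessed by `K ⊓ (A₁ ⊓ B)`
    refine ⟨K ⊓ (A₁ ⊓ B), inf_le_right, ?_, ?_⟩
    · rw [Subgroup.inf_relIndex_right]
      intro h0
      exact hKfin (Subgroup.relIndex_eq_zero_of_le_right inf_le_left h0)
    · -- it is abelian since its commutator lies in `A₂ ⊓ B = ⊥`
      have hcomm : ⁅K ⊓ (A₁ ⊓ B), K ⊓ (A₁ ⊓ B)⁆ = ⊥ := by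
        rw [eq_bot_iff, ← hA₂B]
        refine le_inf ?_ ?_
        · exact le_trans (Subgroup.commutator_mono inf_le_left inf_le_left)
            (le_trans hKc inf_le_right)
        · refine Subgroup.commutator_le.mpr fun g₁ hg₁ g₂ hg₂ => ?_
          have h₁' : g₁ ∈ B := hg₁.2.2
          have h₂' : g₂ ∈ B := hg₂.2.2
          rw [commutatorElement_def]
          exact B.mul_mem (B.mul_mem (B.mul_mem h₁' h₂') (B.inv_mem h₁')) (B.inv_mem h₂')
      have : ∀ x y : ↥(K ⊓ (A₁ ⊓ B)), x * y = y * x := by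
        intro x y
        have hxy : ⁅(x : G), (y : G)⁆ ∈ (⊥ : Subgroup G) := by
          rw [← hcomm]
          exact Subgroup.commutator_mem_commutator x.2 y.2
        have : ⁅(x : G), (y : G)⁆ = 1 := Subgroup.mem_bot.mp hxy
        have := commutatorElement_eq_one_iff_mul_comm.mp this
        exact Subtype.ext this
      letI : CommGroup ↥(K ⊓ (A₁ ⊓ B)) :=
        { mul_comm := this }
      exact (inferInstance : Group.IsSolvable ↥(K ⊓ (A₁ ⊓ B)))
end
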